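/- arXiv:1705.09799 — 4 statements merged into one kernel-verified Lean document; each statement's English description precedes it below -/
import Mathlib

section
/- Let S ⊆ S' be saturated multiplicatively closed subsets of R. Suppose M is semi-S-factorable and S ∩ Z(M) = ∅, and let P be one of the following properties: being présimplifiable, having unique factorization, having finite factorization, being half factorial, having bounded factorization. If M has P with respect to S', then M has P with respect to S (e.g., if M is an S'-UFM then M is an S-UFM, and similarly for the other properties). -/
namespace FactorizationPaper

variable {R : Type*} [CommRing R]

/-- `S` is a saturated multiplicatively closed subset of `R`:
it contains `1`, is closed under multiplication, and `x*y ∈ S` implies `x ∈ S` and `y ∈ S`. -/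
def Saturated (S : Set R) : Prop :=
  1 ∈ S ∧ (∀ x ∈ S, ∀ y ∈ S, x * y ∈ S) ∧ ∀ x y : R, x * y ∈ S → x ∈ S ∧ y ∈ S

/-- The submonoid of `R` associated to a saturated multiplicatively closed set. -/
def Saturated.submonoid {S : Set R} (hS : Saturated S) : Submonoid R where
  carrier := S
  one_mem' := hS.1
  mul_mem' := fun {a b} ha hb => hS.2.1 a ha b hb

section ElementDefs

variable (S : Set R) {N : Type*} [AddCommGroup N] [Module R N]

/-- `m ∼^S n` : `m` and `n` are S-associates. -/
def SAssoc (m n : N) : Prop := (∃ s ∈ S, m = s • n) ∧ (∃ s ∈ S, n = s • m)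

/-- `m ≈^S n` : `m` and `n` are S-strong associates. -/
def SStrongAssoc (m n : N) : Prop := ∃ u : R, IsUnit u ∧ u ∈ S ∧ m = u • n

/-- `m ≅^S n` : `m` and `n` are S-very strong associates. -/
def SVeryStrongAssoc (m n : N) : Prop :=
  SAssoc S m n ∧ ((m = 0 ∧ n = 0) ∨ ∀ s ∈ S, m = s • n → IsUnit s)

/-- `m` is S-primitive. -/
def SPrimitive (m : N) : Prop := ∀ s ∈ S, ∀ n : N, m = s • n → SAssoc S n m

/-- `m` is S-strongly primitive. -/
def SStronglyPrimitive (m : N) : Prop := ∀ s ∈ S, ∀ n : N, m = s • n → SStrongAssoc S n m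

/-- `m` is S-very strongly primitive. -/
def SVeryStronglyPrimitive (m : N) : Prop := ∀ s ∈ S, ∀ n : N, m = s • n → SVeryStrongAssoc S n m

/-- the three kinds of S-primitivity, indexed by `Fin 3` :
`0` = primitive, `1` = strongly primitive, `2` = very strongly primitive. -/
def PrimOf (k : Fin 3) (m : N) : Prop :=
  match k with
  | 0 => SPrimitive S m
  | 1 => SStronglyPrimitive S m
  | 2 => SVeryStronglyPrimitive S m

/-- `m = s • n` is a compact S-atomic factorization of `m`. -/
def IsCompactFactorization (m : N) (s : R) (n : N) : Prop :=
  s ∈ S ∧ SPrimitive S n ∧ m = s • n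

/-- `m = s₁ ⋯ s_k • n` (with the `sᵢ` the members of the list `l`, nonunits in `S`)
is an S-factorization of `m`, of length `l.length`. -/
def IsSFactorization (m : N) (l : List R) (n : N) : Prop :=
  (∀ s ∈ l, s ∈ S ∧ ¬ IsUnit s) ∧ m = l.prod • n

end ElementDefs

/-- `a ∼ b` : associates in `R` (i.e. S-associates with `S = R`, in `R` as an `R`-module). -/
def Assoc (a b : R) : Prop := SAssoc (Set.univ : Set R) a b

/-- `a ≈ b` : strong associates in `R`. -/
def StrongAssoc (a b : R) : Prop := SStrongAssoc (Set.univ : Set R) a b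

/-- `a ≅ b` : very strong associates in `R`. -/
def VeryStrongAssoc (a b : R) : Prop := SVeryStrongAssoc (Set.univ : Set R) a b

/-- `a` is irreducible. -/
def Irred (a : R) : Prop := ¬ IsUnit a ∧ ∀ b c : R, a = b * c → Assoc a b ∨ Assoc a c

/-- `a` is strongly irreducible. -/
def StrongIrred (a : R) : Prop :=
  ¬ IsUnit a ∧ ∀ b c : R, a = b * c → StrongAssoc a b ∨ StrongAssoc a c

/-- `a` is very strongly irreducible. -/
def VeryStrongIrred (a : R) : Prop :=
  ¬ IsUnit a ∧ ∀ b c : R, a = b * c → VeryStrongAssoc a b ∨ VeryStrongAssoc a c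

/-- the three kinds of irreducibility, indexed by `Fin 3` :
`0` = irreducible, `1` = strongly irreducible, `2` = very strongly irreducible. -/
def IrredOf (k : Fin 3) (a : R) : Prop :=
  match k with
  | 0 => Irred a
  | 1 => StrongIrred a
  | 2 => VeryStrongIrred a

section ElementDefs2

variable (S : Set R) {N : Type*} [AddCommGroup N] [Module R N]

/-- `m = s₁ ⋯ s_k • n` is an S-atomic factorization
(each `sᵢ` irreducible and in `S`, `n` S-primitive). -/
def IsSAtomicFactorization (m : N) (l : List R) (n : N) : Prop :=
  IsSFactorization S m l n ∧ (∀ s ∈ l, Irred s) ∧ SPrimitive S n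

/-- an (α, β)-S-factorization: each `sᵢ` is α (a kind of irreducible)
and `n` is S-β (a kind of S-primitive). -/
def IsABFactorization (kα kβ : Fin 3) (m : N) (l : List R) (n : N) : Prop :=
  IsSFactorization S m l n ∧ (∀ s ∈ l, IrredOf kα s) ∧ PrimOf S kβ n

/-- Isomorphism of S-atomic factorizations: same length, S-associate primitive parts,
and the irreducible parts match up to permutation and associates. -/
def FactorIso (l : List R) (n : N) (l' : List R) (n' : N) : Prop :=
  l.length = l'.length ∧ SAssoc S n n' ∧
    ∃ l'' : List R, l'.Perm l'' ∧ List.Forall₂ Assoc l l''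

end ElementDefs2

section SetDefs

variable (S : Set R) {N : Type*} [AddCommGroup N] [Module R N]

/-- `E ⊆ N` is compactly S-atomic. -/
def CompactlySAtomic (E : Set N) : Prop :=
  ∀ m ∈ E, m ≠ 0 → ∃ s n, IsCompactFactorization S m s n

/-- `E ⊆ N` is semi-S-factorable. -/
def SemiSFactorable (E : Set N) : Prop :=
  CompactlySAtomic S E ∧ ∀ m ∈ E, m ≠ 0 → ∀ s n s' n',
    IsCompactFactorization S m s n → IsCompactFactorization S m s' n' → Assoc s s'

/-- `E ⊆ N` is S-factorable. -/
def SFactorable (E : Set N) : Prop :=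
  SemiSFactorable S E ∧ ∀ m ∈ E, m ≠ 0 → ∀ s n s' n',
    IsCompactFactorization S m s n → IsCompactFactorization S m s' n' → SAssoc S n n'

/-- `S` splits `E ⊆ N`. -/
def Splits (E : Set N) : Prop :=
  SemiSFactorable S E ∧
    ∀ r : R, SPrimitive S r → ∀ m : N, SPrimitive S m →
      r • m ≠ 0 → r • m ∈ E → SPrimitive S (r • m)

end SetDefs

/-- The set of zero divisors of the module `M` in `R`. -/
def ZDiv (R : Type*) [CommRing R] (M : Type*) [AddCommGroup M] [Module R M] : Set R :=
  {r : R | ∃ m : M, m ≠ 0 ∧ r • m = 0}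

/-- The annihilator of `M` in `R`, as a set. -/
def AnnSet (R : Type*) [CommRing R] (M : Type*) [AddCommGroup M] [Module R M] : Set R :=
  {r : R | ∀ m : M, r • m = 0}

/-- The annihilator of `M` in `R`, as an ideal. -/
def AnnIdeal (R : Type*) [CommRing R] (M : Type*) [AddCommGroup M] [Module R M] : Ideal R where
  carrier := AnnSet R M
  zero_mem' := fun m => zero_smul R m
  add_mem' := fun {a b} ha hb m => by
    rw [add_smul, ha m, hb m, add_zero]
  smul_mem' := fun c x hx m => by
    rw [smul_eq_mul, mul_smul, hx m, smul_zero]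

section ModuleProps

variable (S : Set R) (N : Type*) [AddCommGroup N] [Module R N]

/-- `N` is S-présimplifiable. -/
def SPresimplifiable : Prop := ∀ s ∈ S, ∀ m : N, s • m = m → IsUnit s ∨ m = 0

/-- `N` is S-atomic. -/
def SAtomicModule : Prop := ∀ m : N, m ≠ 0 → ∃ l n, IsSAtomicFactorization S m l n

/-- `N` is (α, β)-S-atomic. -/
def ABAtomicModule (kα kβ : Fin 3) : Prop :=
  ∀ m : N, m ≠ 0 → ∃ l n, IsABFactorization S kα kβ m l n

/-- `N` is an S-UFM. -/
def SUFM : Prop := SAtomicModule S N ∧ ∀ m : N, m ≠ 0 → ∀ l n l' n',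
  IsSAtomicFactorization S m l n → IsSAtomicFactorization S m l' n' → FactorIso S l n l' n'

/-- `N` is an S-FFM. -/
def SFFM : Prop := SAtomicModule S N ∧ ∀ m : N, m ≠ 0 →
  ∃ Fs : Set (List R × N), Fs.Finite ∧
    ∀ l n, IsSAtomicFactorization S m l n → ∃ p ∈ Fs, FactorIso S l n p.1 p.2

/-- `N` is an S-BFM. -/
def SBFM : Prop := ∀ m : N, m ≠ 0 → ∃ B : ℕ,
  ∀ l n, IsSFactorization S m l n → l.length ≤ B

/-- `N` is an S-HFM. -/
def SHFM : Prop := SAtomicModule S N ∧ ∀ m : N, m ≠ 0 → ∀ l n l' n',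
  IsSAtomicFactorization S m l n → IsSAtomicFactorization S m l' n' → l.length = l'.length

end ModuleProps

section InE

variable (E : Set R)

/-- `R` is présimplifiable in `E`. -/
def PresimpIn : Prop := ∀ a ∈ E, a ≠ 0 → ¬ IsUnit a → ∀ r : R, a = r * a → IsUnit r ∨ a = 0

/-- `R` is atomic in `E`. -/
def AtomicIn : Prop := ∀ a ∈ E, a ≠ 0 → ¬ IsUnit a →
  ∃ l n, IsSAtomicFactorization (Set.univ : Set R) a l n

/-- `R` has unique factorization in `E`. -/
def UFIn : Prop := AtomicIn E ∧ ∀ a ∈ E, a ≠ 0 → ¬ IsUnit a → ∀ l n l' n',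
  IsSAtomicFactorization (Set.univ : Set R) a l n →
  IsSAtomicFactorization (Set.univ : Set R) a l' n' →
  FactorIso (Set.univ : Set R) l n l' n'

/-- `R` has finite factorization in `E`. -/
def FFIn : Prop := AtomicIn E ∧ ∀ a ∈ E, a ≠ 0 → ¬ IsUnit a →
  ∃ Fs : Set (List R × R), Fs.Finite ∧ ∀ l n,
    IsSAtomicFactorization (Set.univ : Set R) a l n →
      ∃ p ∈ Fs, FactorIso (Set.univ : Set R) l n p.1 p.2

/-- `R` is half factorial in `E`. -/
def HFIn : Prop := AtomicIn E ∧ ∀ a ∈ E, a ≠ 0 → ¬ IsUnit a → ∀ l n l' n',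
  IsSAtomicFactorization (Set.univ : Set R) a l n →
  IsSAtomicFactorization (Set.univ : Set R) a l' n' → l.length = l'.length

/-- `R` has bounded factorization in `E`. -/
def BFIn : Prop := ∀ a ∈ E, a ≠ 0 → ¬ IsUnit a →
  ∃ B : ℕ, ∀ l n, IsSFactorization (Set.univ : Set R) a l n → l.length ≤ B

end InE

/-- The set `T = S⁻¹S'` in the localization `R_S`. -/
def locT {S : Set R} (hS : Saturated S) (S' : Set R) : Set (Localization hS.submonoid) :=
  {x | ∃ s' ∈ S', ∃ t : hS.submonoid, x = Localization.mk s' t}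

section DomainDefs

variable (D : Type*) [CommRing D]

/-- two lists of ring elements agree up to order and associates. -/
def ListAssociated (l l' : List D) : Prop :=
  ∃ l'' : List D, l'.Perm l'' ∧ List.Forall₂ Associated l l''

/-- `D` is atomic: every nonzero nonunit is a finite product of irreducibles. -/
def DomAtomic : Prop := ∀ x : D, x ≠ 0 → ¬ IsUnit x →
  ∃ l : List D, (∀ a ∈ l, Irreducible a) ∧ x = l.prod

/-- `D` is a bounded factorization domain. -/
def DomBFD : Prop := ∀ x : D, x ≠ 0 → ¬ IsUnit x →
  ∃ B : ℕ, ∀ l : List D, (∀ a ∈ l, ¬ IsUnit a) → x = l.prod → l.length ≤ B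

/-- `D` is a half factorial domain. -/
def DomHFD : Prop := DomAtomic D ∧ ∀ x : D, x ≠ 0 → ¬ IsUnit x →
  ∀ l l' : List D, (∀ a ∈ l, Irreducible a) → x = l.prod →
    (∀ a ∈ l', Irreducible a) → x = l'.prod → l.length = l'.length

/-- `D` is a finite factorization domain. -/
def DomFFD : Prop := DomAtomic D ∧ ∀ x : D, x ≠ 0 → ¬ IsUnit x →
  ∃ Fs : Set (List D), Fs.Finite ∧ ∀ l : List D, (∀ a ∈ l, Irreducible a) → x = l.prod →
    ∃ l' ∈ Fs, ListAssociated D l l'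

/-- `D` is a unique factorization domain. -/
def DomUFD : Prop := DomAtomic D ∧ ∀ x : D, x ≠ 0 → ¬ IsUnit x →
  ∀ l l' : List D, (∀ a ∈ l, Irreducible a) → x = l.prod →
    (∀ a ∈ l', Irreducible a) → x = l'.prod → ListAssociated D l l'

end DomainDefs

section AXBXdefs

variable (B : Type*) [CommRing B] (A : Subring B)

/-- The ring `R = A + X·B[X]`, as a subring of `B[X]`. -/
def AXBX : Subring (Polynomial B) where
  carrier := {f | f.coeff 0 ∈ A}
  zero_mem' := by simp only [Set.mem_setOf_eq, Polynomial.coeff_zero]; exact zero_mem A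
  one_mem' := by
    simp only [Set.mem_setOf_eq, Polynomial.coeff_one, if_pos rfl]
    exact one_mem A
  add_mem' := fun {f g} hf hg => by
    simp only [Set.mem_setOf_eq, Polynomial.coeff_add] at *
    exact add_mem hf hg
  neg_mem' := fun {f} hf => by
    simp only [Set.mem_setOf_eq, Polynomial.coeff_neg] at *
    exact neg_mem hf
  mul_mem' := fun {f g} hf hg => by
    simp only [Set.mem_setOf_eq, Polynomial.mul_coeff_zero] at *
    exact mul_mem hf hg

/-- The saturated multiplicatively closed subset `S = (U(B) ∩ A) ∪ {u·Xⁿ : u ∈ U(B), n ≥ 1}`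
of `R = A + X·B[X]`. -/
def Sset : Set (AXBX B A) :=
  {f | (∃ u : B, IsUnit u ∧ u ∈ A ∧ (f : Polynomial B) = Polynomial.C u) ∨
       (∃ u : B, IsUnit u ∧ ∃ n : ℕ, 1 ≤ n ∧
          (f : Polynomial B) = Polynomial.C u * Polynomial.X ^ n)}

/-- The saturated multiplicatively closed subset `S₀ = U(B) ∩ A` of `A`. -/
def S0set : Set A := {a : A | IsUnit (a : B)}

end AXBXdefs


section Proof12Aux

variable {R : Type*} [CommRing R] {M : Type*} [AddCommGroup M] [Module R M]

private lemma aux_cancel {S : Set R} (hZ : S ∩ ZDiv R M = ∅) {s : R} (hs : s ∈ S) {x y : M}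
    (h : s • x = s • y) : x = y := by
  by_contra hxy
  have hmem : s ∈ S ∩ ZDiv R M :=
    ⟨hs, ⟨x - y, sub_ne_zero.mpr hxy, by rw [smul_sub, h, sub_self]⟩⟩
  rw [hZ] at hmem
  exact hmem

private lemma aux_sne {S : Set R} (hZ : S ∩ ZDiv R M = ∅) {s : R} (hs : s ∈ S) {x : M}
    (hx : x ≠ 0) : s • x ≠ 0 := by
  intro h
  exact hx (aux_cancel hZ hs (by rw [h, smul_zero]))

private lemma aux_prod_mem {S : Set R} (hS : Saturated S) :
    ∀ {l : List R}, (∀ a ∈ l, a ∈ S) → l.prod ∈ S := by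
  intro l
  induction l with
  | nil => intro _; simpa using hS.1
  | cons a t ih =>
    intro h
    rw [List.prod_cons]
    exact hS.2.1 a (h a (by simp)) t.prod (ih fun b hb => h b (by simp [hb]))

private lemma aux_inv_mem {S : Set R} (hS : Saturated S) {u v : R} (huv : u * v = 1) : v ∈ S :=
  (hS.2.2 u v (by rw [huv]; exact hS.1)).2

private lemma assoc_of {a b r r' : R} (h1 : a = r * b) (h2 : b = r' * a) : Assoc a b :=
  ⟨⟨r, trivial, by rw [smul_eq_mul]; exact h1⟩, ⟨r', trivial, by rw [smul_eq_mul]; exact h2⟩⟩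

private lemma assoc_elim {a b : R} (h : Assoc a b) :
    (∃ r : R, a = r * b) ∧ ∃ r' : R, b = r' * a := by
  obtain ⟨⟨r, -, h1⟩, ⟨r', -, h2⟩⟩ := h
  exact ⟨⟨r, by rwa [smul_eq_mul] at h1⟩, ⟨r', by rwa [smul_eq_mul] at h2⟩⟩

private lemma assoc_refl (a : R) : Assoc a a := assoc_of (one_mul a).symm (one_mul a).symm

private lemma assoc_symm {a b : R} (h : Assoc a b) : Assoc b a := ⟨h.2, h.1⟩

private lemma assoc_trans {a b c : R} (h1 : Assoc a b) (h2 : Assoc b c) : Assoc a c := by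
  obtain ⟨⟨r1, hr1⟩, ⟨r1', hr1'⟩⟩ := assoc_elim h1
  obtain ⟨⟨r2, hr2⟩, ⟨r2', hr2'⟩⟩ := assoc_elim h2
  exact assoc_of (by rw [hr1, hr2, ← mul_assoc]) (by rw [hr2', hr1', ← mul_assoc])

private lemma sassoc_symm {S : Set R} {m n : M} (h : SAssoc S m n) : SAssoc S n m := ⟨h.2, h.1⟩

private lemma sassoc_trans {S : Set R} (hS : Saturated S) {m n p : M}
    (h1 : SAssoc S m n) (h2 : SAssoc S n p) : SAssoc S m p := by
  obtain ⟨⟨s1, hs1, e1⟩, ⟨t1, ht1, f1⟩⟩ := h1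
  obtain ⟨⟨s2, hs2, e2⟩, ⟨t2, ht2, f2⟩⟩ := h2
  refine ⟨⟨s1 * s2, hS.2.1 s1 hs1 s2 hs2, ?_⟩, ⟨t2 * t1, hS.2.1 t2 ht2 t1 ht1, ?_⟩⟩
  · rw [e1, e2, mul_smul]
  · rw [f2, f1, mul_smul]

private lemma lemU {S : Set R} (hS : Saturated S) (hM : SemiSFactorable S (Set.univ : Set M))
    {n z : M} {v : R} (hprim : SPrimitive S n) (hn : n ≠ 0) (hv : v ∈ S) (h : n = v • z) :
    IsUnit v := by
  have hz : z ≠ 0 := by rintro rfl; rw [smul_zero] at h; exact hn h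
  obtain ⟨d, p, hd, hp, hzdp⟩ := hM.1 z (Set.mem_univ z) hz
  have c1 : IsCompactFactorization S n 1 n := ⟨hS.1, hprim, (one_smul R n).symm⟩
  have c2 : IsCompactFactorization S n (v * d) p :=
    ⟨hS.2.1 v hv d hd, hp, by rw [h, hzdp, mul_smul]⟩
  have ha := hM.2 n (Set.mem_univ n) hn 1 n (v * d) p c1 c2
  obtain ⟨⟨r, hr⟩, -⟩ := assoc_elim ha
  have : IsUnit (v * d) := ⟨⟨v * d, r, by rw [mul_comm]; exact hr.symm, hr.symm⟩, rfl⟩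
  exact isUnit_of_mul_isUnit_left this

private lemma prim_unit {S : Set R} (hS : Saturated S) {n : M} {u : R}
    (hprim : SPrimitive S n) (hu : u ∈ S) (huu : IsUnit u) : SPrimitive S (u • n) := by
  obtain ⟨v, hv⟩ := huu.exists_right_inv
  have hvS : v ∈ S := aux_inv_mem hS hv
  intro s hs z hz
  have hn : n = (v * s) • z := by
    have h0 : n = v • (u • n) := by rw [← mul_smul, mul_comm, hv, one_smul]
    rw [h0, hz, ← mul_smul]
  have h1 : SAssoc S z n := hprim (v * s) (hS.2.1 v hvS s hs) z hn
  have h2 : SAssoc S n (u • n) :=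
    ⟨⟨v, hvS, by rw [← mul_smul, mul_comm, hv, one_smul]⟩, ⟨u, hu, rfl⟩⟩
  exact sassoc_trans hS h1 h2

private lemma compact_pair {S : Set R} (hS : Saturated S)
    (hM : SemiSFactorable S (Set.univ : Set M)) (hZ : S ∩ ZDiv R M = ∅)
    {m n n' : M} {σ σ' : R} (hm : m ≠ 0)
    (c1 : IsCompactFactorization S m σ n) (c2 : IsCompactFactorization S m σ' n') :
    SAssoc S n n' := by
  have ha := hM.2 m (Set.mem_univ m) hm σ n σ' n' c1 c2
  obtain ⟨⟨r, hr⟩, ⟨r', hr'⟩⟩ := assoc_elim ha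
  have hrS : r ∈ S := (hS.2.2 r σ' (by rw [← hr]; exact c1.1)).1
  have hr'S : r' ∈ S := (hS.2.2 r' σ (by rw [← hr']; exact c2.1)).1
  have e1 : σ' • n' = σ' • (r • n) := by
    rw [← c2.2.2, ← mul_smul, mul_comm σ' r, ← hr, ← c1.2.2]
  have e2 : σ • n = σ • (r' • n') := by
    rw [← c1.2.2, ← mul_smul, mul_comm σ r', ← hr', ← c2.2.2]
  exact ⟨⟨r', hr'S, aux_cancel hZ c1.1 e2⟩, ⟨r, hrS, aux_cancel hZ c2.1 e1⟩⟩

private lemma lemKstar {S S' : Set R} (hS : Saturated S) (hSS' : S ⊆ S')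
    (hM : SemiSFactorable S (Set.univ : Set M)) (hZ : S ∩ ZDiv R M = ∅)
    {a : R} {ρ : M} (ha : a ∈ S) (hρ : ρ ≠ 0) (hp : SPrimitive S' (a • ρ)) : IsUnit a := by
  obtain ⟨⟨w, hw, hwe⟩, -⟩ := hp a (hSS' ha) ρ rfl
  obtain ⟨g, π, hg, hπ, hρe⟩ := hM.1 ρ (Set.mem_univ ρ) hρ
  have hπ0 : π ≠ 0 := by rintro rfl; rw [smul_zero] at hρe; exact hρ hρe
  have e1 : g • π = g • ((w * a) • π) := by
    calc g • π = ρ := hρe.symm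
    _ = w • (a • ρ) := hwe
    _ = w • (a • (g • π)) := by rw [← hρe]
    _ = g • ((w * a) • π) := by
        rw [smul_smul, smul_smul, smul_smul]
        congr 1
        ring
  have e2 : π = a • (w • π) := by
    have h0 := aux_cancel hZ hg e1
    rw [smul_smul, mul_comm a w]
    exact h0
  obtain ⟨⟨b, hb, hbe⟩, -⟩ := hπ a ha (w • π) e2
  have e3 : π = (a * b) • π := by rw [mul_smul, ← hbe]; exact e2
  have hab : IsUnit (a * b) := lemU hS hM hπ hπ0 (hS.2.1 a ha b hb) e3
  exact isUnit_of_mul_isUnit_left hab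

private lemma atomic_compact {S : Set R} (hS : Saturated S) {m : M} {l : List R} {n : M}
    (h : IsSAtomicFactorization S m l n) : IsCompactFactorization S m l.prod n :=
  ⟨aux_prod_mem hS (fun a ha => (h.1.1 a ha).1), h.2.2, h.1.2⟩

private lemma ext_bound {S S' : Set R} (hS : Saturated S) (hSS' : S ⊆ S')
    (hM : SemiSFactorable S (Set.univ : Set M)) (hZ : S ∩ ZDiv R M = ∅)
    (hA : SAtomicModule S' M) :
    ∀ (l : List R) (m z : M), m ≠ 0 → IsSFactorization S m l z →
      ∃ T r, IsSAtomicFactorization S' m T r ∧ l.length ≤ T.length := by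
  intro l
  induction l with
  | nil =>
    intro m z hm _
    obtain ⟨T, r, hT⟩ := hA m hm
    exact ⟨T, r, hT, Nat.zero_le _⟩
  | cons a t ih =>
    intro m z hm hf
    obtain ⟨hmem, heq⟩ := hf
    have haS : a ∈ S := (hmem a List.mem_cons_self).1
    have haU : ¬ IsUnit a := (hmem a List.mem_cons_self).2
    have hmeq : m = a • (t.prod • z) := by rw [heq, List.prod_cons, mul_smul]
    have hm₁ : t.prod • z ≠ 0 := by
      intro h0; apply hm; rw [hmeq, h0, smul_zero]
    have hf₁ : IsSFactorization S (t.prod • z) t z :=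
      ⟨fun s hs => hmem s (List.mem_cons_of_mem a hs), rfl⟩
    obtain ⟨T₁, r₁, hT₁, hlen₁⟩ := ih (t.prod • z) z hm₁ hf₁
    have hr₁ : r₁ ≠ 0 := fun h0 => hm₁ (by rw [hT₁.1.2, h0, smul_zero])
    have har₁ : a • r₁ ≠ 0 := aux_sne hZ haS hr₁
    obtain ⟨W, τ, hW⟩ := hA (a • r₁) har₁
    have hWne : W ≠ [] := by
      intro h0
      apply haU
      refine lemKstar hS hSS' hM hZ haS hr₁ ?_
      have hτ : a • r₁ = τ := by rw [hW.1.2, h0, List.prod_nil, one_smul]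
      rw [hτ]
      exact hW.2.2
    have hWlen : 1 ≤ W.length := by
      cases W with
      | nil => exact absurd rfl hWne
      | cons _ _ => simp
    refine ⟨T₁ ++ W, τ, ⟨⟨?_, ?_⟩, ?_, hW.2.2⟩, ?_⟩
    · intro s hs
      rcases List.mem_append.mp hs with h | h
      · exact hT₁.1.1 s h
      · exact hW.1.1 s h
    · rw [List.prod_append, hmeq, hT₁.1.2, smul_smul, mul_comm a, mul_smul, hW.1.2, smul_smul]
    · intro s hs
      rcases List.mem_append.mp hs with h | h
      · exact hT₁.2.1 s h
      · exact hW.2.1 s h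
    · rw [List.length_append, List.length_cons]
      omega

private lemma fact_s {S : Set R} (hS : Saturated S)
    (hM : SemiSFactorable S (Set.univ : Set M)) :
    ∀ B : ℕ, ∀ s : R, s ∈ S → ∀ n₀ : M, SPrimitive S n₀ → n₀ ≠ 0 →
      (∀ l (z : M), IsSFactorization S (s • n₀) l z → l.length ≤ B) →
      IsUnit s ∨ ∃ (e : R) (L : List R), IsUnit e ∧ L ≠ [] ∧
        (∀ a ∈ L, a ∈ S ∧ Irred a) ∧ s = e * L.prod := by
  intro B
  induction B with
  | zero =>
    intro s hsS n₀ hprim hn₀ hbound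
    by_cases hsu : IsUnit s
    · exact Or.inl hsu
    · exfalso
      have hfs : IsSFactorization S (s • n₀) [s] n₀ := by
        constructor
        · intro a ha
          rw [List.mem_singleton] at ha
          subst ha; exact ⟨hsS, hsu⟩
        · simp
      have := hbound [s] n₀ hfs
      simp at this
  | succ B' ih =>
    intro s hsS n₀ hprim hn₀ hbound
    by_cases hsu : IsUnit s
    · exact Or.inl hsu
    right
    by_cases hirr : Irred s
    · refine ⟨1, [s], isUnit_one, by simp, ?_, by simp⟩
      intro a ha
      rw [List.mem_singleton] at ha
      subst ha; exact ⟨hsS, hirr⟩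
    · have hsplit : ∃ b c : R, s = b * c ∧ ¬ Assoc s b ∧ ¬ Assoc s c := by
        unfold Irred at hirr
        push_neg at hirr
        exact hirr hsu
      obtain ⟨b, c, hbc, hnb, hnc⟩ := hsplit
      have hbS : b ∈ S := (hS.2.2 b c (hbc ▸ hsS)).1
      have hcS : c ∈ S := (hS.2.2 b c (hbc ▸ hsS)).2
      have hbu : ¬ IsUnit b := by
        intro hu
        obtain ⟨v, hv⟩ := hu.exists_left_inv
        exact hnc (assoc_of (r := b) (r' := v) hbc (by rw [hbc, ← mul_assoc, hv, one_mul]))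
      have hcu : ¬ IsUnit c := by
        intro hu
        obtain ⟨v, hv⟩ := hu.exists_left_inv
        refine hnb (assoc_of (r := c) (r' := v) (by rw [hbc, mul_comm]) ?_)
        rw [hbc, mul_comm b c, ← mul_assoc, hv, one_mul]
      have hboundc : ∀ l (z : M), IsSFactorization S (c • n₀) l z → l.length ≤ B' := by
        intro l z hf
        have hfs : IsSFactorization S (s • n₀) (b :: l) z := by
          refine ⟨?_, ?_⟩
          · intro x hx
            rcases List.mem_cons.mp hx with h | h
            · subst h; exact ⟨hbS, hbu⟩
            · exact hf.1 x h
          · rw [List.prod_cons, hbc, mul_smul, mul_smul, hf.2]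
        have h2 := hbound _ _ hfs
        rw [List.length_cons] at h2
        omega
      have hboundb : ∀ l (z : M), IsSFactorization S (b • n₀) l z → l.length ≤ B' := by
        intro l z hf
        have hfs : IsSFactorization S (s • n₀) (c :: l) z := by
          refine ⟨?_, ?_⟩
          · intro x hx
            rcases List.mem_cons.mp hx with h | h
            · subst h; exact ⟨hcS, hcu⟩
            · exact hf.1 x h
          · rw [List.prod_cons, hbc, mul_comm b c, mul_smul, mul_smul, hf.2]
        have h2 := hbound _ _ hfs
        rw [List.length_cons] at h2
        omega
      rcases ih c hcS n₀ hprim hn₀ hboundc with h | ⟨ec, Lc, hec, hLc, hmemc, heqc⟩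
      · exact absurd h hcu
      rcases ih b hbS n₀ hprim hn₀ hboundb with h | ⟨eb, Lb, heb, hLb, hmemb, heqb⟩
      · exact absurd h hbu
      refine ⟨eb * ec, Lb ++ Lc, heb.mul hec, by simp [hLb], ?_, ?_⟩
      · intro a ha
        rcases List.mem_append.mp ha with h | h
        exacts [hmemb a h, hmemc a h]
      · rw [hbc, heqb, heqc, List.prod_append]; ring

private lemma atomic_of_bound {S : Set R} (hS : Saturated S)
    (hM : SemiSFactorable S (Set.univ : Set M))
    (hb : ∀ m : M, m ≠ 0 → ∃ B, ∀ l (z : M), IsSFactorization S m l z → l.length ≤ B) :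
    SAtomicModule S M := by
  intro m hm
  obtain ⟨s₀, n₀, hs₀, hn₀p, hmeq⟩ := hM.1 m (Set.mem_univ m) hm
  have hn₀ : n₀ ≠ 0 := fun h => hm (by rw [hmeq, h, smul_zero])
  obtain ⟨B, hB⟩ := hb m hm
  have hB' : ∀ l (z : M), IsSFactorization S (s₀ • n₀) l z → l.length ≤ B := by
    intro l z hf
    rw [← hmeq] at hf
    exact hB l z hf
  rcases fact_s hS hM B s₀ hs₀ n₀ hn₀p hn₀ hB' with hu | ⟨e, L, he, hLne, hLmem, heq⟩
  · refine ⟨[], m, ⟨⟨by simp, by simp⟩, by simp, ?_⟩⟩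
    rw [hmeq]
    exact prim_unit hS hn₀p hs₀ hu
  · have heS : e ∈ S := (hS.2.2 e L.prod (by rw [← heq]; exact hs₀)).1
    refine ⟨L, e • n₀, ⟨⟨?_, ?_⟩, ?_, prim_unit hS hn₀p heS he⟩⟩
    · intro a ha
      exact ⟨(hLmem a ha).1, (hLmem a ha).2.1⟩
    · rw [hmeq, heq, mul_comm e, mul_smul]
    · intro a ha
      exact (hLmem a ha).2

end Proof12Aux

section Proof12Phi

variable {R : Type*} [CommRing R]

private def assocSetoid (R : Type*) [CommRing R] : Setoid R :=
  ⟨Assoc, ⟨assoc_refl, fun h => assoc_symm h, fun h1 h2 => assoc_trans h1 h2⟩⟩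

private def phi (l : List R) : Multiset (Quotient (assocSetoid R)) :=
  (l.map (Quotient.mk (assocSetoid R)) : List (Quotient (assocSetoid R)))

private lemma quot_sound {a b : R} (h : Assoc a b) :
    Quotient.mk (assocSetoid R) a = Quotient.mk (assocSetoid R) b :=
  Quot.sound h

private lemma quot_exact {a b : R}
    (h : Quotient.mk (assocSetoid R) a = Quotient.mk (assocSetoid R) b) : Assoc a b :=
  Quotient.exact h

private lemma phi_forall₂ {l l' : List R} (h : List.Forall₂ Assoc l l') : phi l = phi l' := by
  unfold phi
  congr 1
  induction h with
  | nil => rfl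
  | cons h _ ih => simp only [List.map_cons]; rw [ih, quot_sound h]

private lemma phi_perm {l l' : List R} (h : l.Perm l') : phi l = phi l' := by
  unfold phi
  exact Multiset.coe_eq_coe.mpr (h.map _)

private lemma phi_append (l l' : List R) : phi (l ++ l') = phi l + phi l' := by
  unfold phi
  simp

private lemma phi_length (l : List R) : (phi l).card = l.length := by
  unfold phi
  simp

private lemma phi_to_perm :
    ∀ (l l' : List R), phi l = phi l' →
      ∃ l₀, l'.Perm l₀ ∧ List.Forall₂ Assoc l l₀ := by
  intro l
  induction l with
  | nil =>
    intro l' h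
    have h0 : phi l' = 0 := h.symm
    have h1 : l'.map (Quotient.mk (assocSetoid R)) = [] := by
      unfold phi at h0
      exact (Multiset.coe_eq_zero _).mp h0
    have hl' : l' = [] := List.map_eq_nil_iff.mp h1
    exact ⟨[], by rw [hl'], List.Forall₂.nil⟩
  | cons a t ih =>
    intro l' h
    classical
    have hmem : (Quotient.mk (assocSetoid R) a) ∈ phi l' := by
      rw [← h]; unfold phi; simp
    obtain ⟨b, hbl', hba⟩ :
        ∃ b ∈ l', Quotient.mk (assocSetoid R) b = Quotient.mk (assocSetoid R) a := by
      unfold phi at hmem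
      simpa using hmem
    have hAba : Assoc b a := quot_exact hba
    have hperm : l'.Perm (b :: l'.erase b) := List.perm_cons_erase hbl'
    have h2 : phi (a :: t) = phi (b :: l'.erase b) := by rw [h]; exact phi_perm hperm
    have h3 : (Quotient.mk (assocSetoid R) a) ::ₘ phi t
        = (Quotient.mk (assocSetoid R) b) ::ₘ phi (l'.erase b) := by
      simpa [phi] using h2
    rw [← hba] at h3
    have h4 : phi t = phi (l'.erase b) := (Multiset.cons_inj_right _).mp h3
    obtain ⟨t₀, hp₀, hf₀⟩ := ih (l'.erase b) h4
    exact ⟨b :: t₀, hperm.trans (hp₀.cons b), List.Forall₂.cons (assoc_symm hAba) hf₀⟩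

end Proof12Phi

section Proof12Ext

variable {R : Type*} [CommRing R] {M : Type*} [AddCommGroup M] [Module R M]

private lemma extend_atomic {S S' : Set R} (hS : Saturated S) (hS' : Saturated S') (hSS' : S ⊆ S')
    (hM : SemiSFactorable S (Set.univ : Set M)) (hZ : S ∩ ZDiv R M = ∅)
    {m n n₀ : M} {s₀ : R} {l V : List R} {ρ : M}
    (hm : m ≠ 0) (hl : IsSAtomicFactorization S m l n)
    (hc : IsCompactFactorization S m s₀ n₀)
    (hV : IsSAtomicFactorization S' n₀ V ρ) :
    ∃ b : R, b ∈ S ∧ IsUnit b ∧ n = b • n₀ ∧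
      IsSAtomicFactorization S' m (l ++ V) (b • ρ) := by
  have hn0 : n ≠ 0 := fun h => hm (by rw [hl.1.2, h, smul_zero])
  have hsa := compact_pair hS hM hZ hm (atomic_compact hS hl) hc
  obtain ⟨⟨b, hbS, hbe⟩, -⟩ := hsa
  have hbu : IsUnit b := lemU hS hM hl.2.2 hn0 hbS hbe
  refine ⟨b, hbS, hbu, hbe, ⟨⟨?_, ?_⟩, ?_, prim_unit hS' hV.2.2 (hSS' hbS) hbu⟩⟩
  · intro x hx
    rcases List.mem_append.mp hx with h | h
    · exact ⟨hSS' (hl.1.1 x h).1, (hl.1.1 x h).2⟩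
    · exact hV.1.1 x h
  · rw [List.prod_append, hl.1.2, hbe, hV.1.2, smul_smul, smul_smul, smul_smul]
    congr 1
    ring
  · intro x hx
    rcases List.mem_append.mp hx with h | h
    · exact hl.2.1 x h
    · exact hV.2.1 x h

end Proof12Ext

theorem statement12 {R : Type*} [CommRing R] {M : Type*} [AddCommGroup M] [Module R M]
    [Nontrivial M] (S S' : Set R) (hS : Saturated S) (hS' : Saturated S') (hSS' : S ⊆ S')
    (hM : SemiSFactorable S (Set.univ : Set M)) (hZ : S ∩ ZDiv R M = ∅) :
    (SPresimplifiable S' M → SPresimplifiable S M) ∧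
    (SUFM S' M → SUFM S M) ∧
    (SFFM S' M → SFFM S M) ∧
    (SHFM S' M → SHFM S M) ∧
    (SBFM S' M → SBFM S M) := by
  classical
  have hcompact : ∀ m : M, m ≠ 0 → ∃ s₀ n₀, IsCompactFactorization S m s₀ n₀ :=
    fun m hm => hM.1 m (Set.mem_univ m) hm
  -- bound transfer machinery
  have hbnd : SAtomicModule S' M →
      (∀ m : M, m ≠ 0 → ∃ B, ∀ T (r : M), IsSAtomicFactorization S' m T r → T.length ≤ B) →
      SAtomicModule S M := by
    intro hA hL
    apply atomic_of_bound hS hM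
    intro m hm
    obtain ⟨B, hB⟩ := hL m hm
    refine ⟨B, fun l z hf => ?_⟩
    obtain ⟨T, r, hT, hlen⟩ := ext_bound hS hSS' hM hZ hA l m z hm hf
    exact hlen.trans (hB T r hT)
  refine ⟨?_, ?_, ?_, ?_, ?_⟩
  · -- S-présimplifiable (does not even need the hypothesis)
    intro _ s hs m hsm
    by_cases hm : m = 0
    · exact Or.inr hm
    · left
      obtain ⟨s₀, n₀, hs₀, hn₀p, hmeq⟩ := hcompact m hm
      have hn₀ : n₀ ≠ 0 := fun h => hm (by rw [hmeq, h, smul_zero])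
      have he : s₀ • (s • n₀) = s₀ • n₀ := by
        rw [smul_smul, mul_comm, ← smul_smul, ← hmeq, hsm, hmeq]
      exact lemU hS hM hn₀p hn₀ hs (aux_cancel hZ hs₀ he).symm
  · -- UFM
    rintro ⟨hA', huniq⟩
    have hatom : SAtomicModule S M := by
      refine hbnd hA' (fun m hm => ?_)
      obtain ⟨T₀, r₀, hT₀⟩ := hA' m hm
      exact ⟨T₀.length, fun T r hT => le_of_eq (huniq m hm T r T₀ r₀ hT hT₀).1⟩
    refine ⟨hatom, ?_⟩
    intro m hm l n l' n' h1 h2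
    obtain ⟨s₀, n₀, hc⟩ := hcompact m hm
    have hn₀0 : n₀ ≠ 0 := fun h => hm (by rw [hc.2.2, h, smul_zero])
    obtain ⟨V, ρ, hV⟩ := hA' n₀ hn₀0
    obtain ⟨b, hbS, hbu, hbe, hext⟩ := extend_atomic hS hS' hSS' hM hZ hm h1 hc hV
    obtain ⟨b', hbS', hbu', hbe', hext'⟩ := extend_atomic hS hS' hSS' hM hZ hm h2 hc hV
    obtain ⟨hlen, -, l'', hperm, hfa⟩ := huniq m hm (l ++ V) (b • ρ) (l' ++ V) (b' • ρ) hext hext'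
    have hlen2 : l.length = l'.length := by
      rw [List.length_append, List.length_append] at hlen; omega
    have hx1 := compact_pair hS hM hZ hm (atomic_compact hS h1) hc
    have hx2 := compact_pair hS hM hZ hm (atomic_compact hS h2) hc
    have hnn' : SAssoc S n n' := sassoc_trans hS hx1 (sassoc_symm hx2)
    have hphi : phi l = phi l' := by
      have e1 : phi (l ++ V) = phi l'' := phi_forall₂ hfa
      have e2 : phi (l' ++ V) = phi l'' := phi_perm hperm
      rw [phi_append] at e1 e2
      exact add_right_cancel (e1.trans e2.symm)
    obtain ⟨l₀, hp₀, hf₀⟩ := phi_to_perm l l' hphi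
    exact ⟨hlen2, hnn', l₀, hp₀, hf₀⟩
  · -- FFM
    rintro ⟨hA', hfin⟩
    have hatom : SAtomicModule S M := by
      refine hbnd hA' (fun m hm => ?_)
      obtain ⟨Fs, hFsfin, hcov⟩ := hfin m hm
      obtain ⟨B, hB⟩ := (hFsfin.image (fun p => p.1.length)).bddAbove
      refine ⟨B, fun T r hT => ?_⟩
      obtain ⟨p, hp, hiso⟩ := hcov T r hT
      rw [hiso.1]
      exact hB ⟨p, hp, rfl⟩
    refine ⟨hatom, ?_⟩
    intro m hm
    obtain ⟨s₀, n₀, hc⟩ := hcompact m hm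
    have hn₀0 : n₀ ≠ 0 := fun h => hm (by rw [hc.2.2, h, smul_zero])
    obtain ⟨V, ρ, hV⟩ := hA' n₀ hn₀0
    obtain ⟨Fs', hFs'fin, hcov⟩ := hfin m hm
    refine ⟨(fun p' : List R × M =>
        if h : ∃ pair : List R × M,
          IsSAtomicFactorization S m pair.1 pair.2 ∧ phi pair.1 + phi V = phi p'.1
        then h.choose else ([], (0 : M))) '' Fs', hFs'fin.image _, ?_⟩
    intro l n hln
    obtain ⟨b, hbS, hbu, hbe, hext⟩ := extend_atomic hS hS' hSS' hM hZ hm hln hc hV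
    obtain ⟨p', hp', hiso⟩ := hcov (l ++ V) (b • ρ) hext
    obtain ⟨hlen1, -, l'', hperm, hfa⟩ := hiso
    have hphi1 : phi l + phi V = phi p'.1 := by
      have e1 : phi (l ++ V) = phi l'' := phi_forall₂ hfa
      have e2 : phi p'.1 = phi l'' := phi_perm hperm
      rw [phi_append] at e1
      exact e1.trans e2.symm
    have hQex : ∃ pair : List R × M,
        IsSAtomicFactorization S m pair.1 pair.2 ∧ phi pair.1 + phi V = phi p'.1 :=
      ⟨(l, n), hln, hphi1⟩
    refine ⟨_, Set.mem_image_of_mem _ hp', ?_⟩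
    rw [dif_pos hQex]
    obtain ⟨hq1, hq2⟩ := hQex.choose_spec
    have hphi2 : phi l = phi hQex.choose.1 := by
      have : phi l + phi V = phi hQex.choose.1 + phi V := by rw [hphi1, hq2]
      exact add_right_cancel this
    have hlenl : l.length = hQex.choose.1.length := by
      rw [← phi_length l, ← phi_length hQex.choose.1, hphi2]
    have hx1 := compact_pair hS hM hZ hm (atomic_compact hS hln) hc
    have hx2 := compact_pair hS hM hZ hm (atomic_compact hS hq1) hc
    have hnn : SAssoc S n hQex.choose.2 := sassoc_trans hS hx1 (sassoc_symm hx2)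
    obtain ⟨l₀, hp₀, hf₀⟩ := phi_to_perm l hQex.choose.1 hphi2
    exact ⟨hlenl, hnn, l₀, hp₀, hf₀⟩
  · -- HFM
    rintro ⟨hA', hlen⟩
    have hatom : SAtomicModule S M := by
      refine hbnd hA' (fun m hm => ?_)
      obtain ⟨T₀, r₀, hT₀⟩ := hA' m hm
      exact ⟨T₀.length, fun T r hT => le_of_eq (hlen m hm T r T₀ r₀ hT hT₀)⟩
    refine ⟨hatom, ?_⟩
    intro m hm l n l' n' h1 h2
    obtain ⟨s₀, n₀, hc⟩ := hcompact m hm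
    have hn₀0 : n₀ ≠ 0 := fun h => hm (by rw [hc.2.2, h, smul_zero])
    obtain ⟨V, ρ, hV⟩ := hA' n₀ hn₀0
    obtain ⟨b, hbS, hbu, hbe, hext⟩ := extend_atomic hS hS' hSS' hM hZ hm h1 hc hV
    obtain ⟨b', hbS', hbu', hbe', hext'⟩ := extend_atomic hS hS' hSS' hM hZ hm h2 hc hV
    have := hlen m hm (l ++ V) (b • ρ) (l' ++ V) (b' • ρ) hext hext'
    rw [List.length_append, List.length_append] at this
    omega
  · -- BFM
    intro hB m hm
    obtain ⟨B, hB'⟩ := hB m hm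
    exact ⟨B, fun l z hf =>
      hB' l z ⟨fun s hs => ⟨hSS' (hf.1 s hs).1, (hf.1 s hs).2⟩, hf.2⟩⟩


end FactorizationPaper
end

section
/- Let S ⊆ S' be saturated multiplicatively closed subsets of R and T = S^{-1}S'. Assume S splits M, S' \ Ann(M) is compactly S-atomic (as a subset of the R-module R), and S ∩ Z(M) = S ∩ Z(R) = ∅. Let y_1, y_2 ∈ S' \ (S ∪ Ann(M)) be irreducible and let 0 ≠ m_1, m_2 ∈ M be S'-primitive. Then y_1/1 ∼ y_2/1 in R_S if and only if y_1 ∼ y_2 in R, and m_1/1 ∼^T m_2/1 in M_S if and only if m_1 ∼^{S'} m_2 in M. -/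
namespace FactorizationPaper

variable {R : Type*} [CommRing R]

section AuxProof

variable {R : Type*} [CommRing R] {M : Type*} [AddCommGroup M] [Module R M]
variable {S S' : Set R}

lemma ann_zero : (0 : R) ∈ AnnSet R M := fun m => zero_smul R m

lemma ne_zero_of_not_ann {y : R} (h : y ∉ AnnSet R M) : y ≠ 0 :=
  fun hy => h (hy ▸ ann_zero)

lemma cancelM (hZM : S ∩ ZDiv R M = ∅) {s : R} (hs : s ∈ S)
    {x y : M} (h : s • x = s • y) : x = y := by
  by_contra hne
  have hmem : s ∈ S ∩ ZDiv R M :=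
    ⟨hs, ⟨x - y, sub_ne_zero.mpr hne, by rw [smul_sub, h, sub_self]⟩⟩
  rw [hZM] at hmem
  exact hmem

lemma cancelR (hZR : S ∩ ZDiv R R = ∅) {s : R} (hs : s ∈ S)
    {x y : R} (h : s * x = s * y) : x = y := by
  by_contra hne
  have hmem : s ∈ S ∩ ZDiv R R :=
    ⟨hs, ⟨x - y, sub_ne_zero.mpr hne, by rw [smul_eq_mul, mul_sub, h, sub_self]⟩⟩
  rw [hZR] at hmem
  exact hmem

lemma smulneM (hZM : S ∩ ZDiv R M = ∅) {s : R} (hs : s ∈ S)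
    {x : M} (hx : x ≠ 0) : s • x ≠ 0 :=
  fun h => hx (cancelM hZM hs (by rw [h, smul_zero]))

lemma exists_prim (hsplit : Splits S (Set.univ : Set M))
    {v : R} (hv : v ∉ AnnSet R M) :
    ∃ p : M, SPrimitive S p ∧ v • p ≠ 0 := by
  have hv' : ¬ ∀ m : M, v • m = 0 := hv
  push_neg at hv'
  obtain ⟨m₀, hm₀⟩ := hv'
  have hm₀0 : m₀ ≠ 0 := fun h => hm₀ (by rw [h, smul_zero])
  obtain ⟨τ, p, hτ, hp, hfac⟩ := hsplit.1.1 m₀ trivial hm₀0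
  refine ⟨p, hp, fun h => hm₀ ?_⟩
  rw [hfac, smul_comm, h, smul_zero]

lemma semiR (hS : Saturated S) (hsplit : Splits S (Set.univ : Set M))
    (hZM : S ∩ ZDiv R M = ∅) (hZR : S ∩ ZDiv R R = ∅)
    {v σ σ' n n' : R} (hvann : v ∉ AnnSet R M)
    (h1 : IsCompactFactorization S v σ n) (h2 : IsCompactFactorization S v σ' n') :
    ∃ e ∈ S, ∃ f ∈ S, σ' = e * σ ∧ σ = f * σ' ∧ n = e * n' ∧ n' = f * n := by
  obtain ⟨hσ, hn, hv1⟩ := h1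
  obtain ⟨hσ', hn', hv2⟩ := h2
  rw [smul_eq_mul] at hv1 hv2
  obtain ⟨p, hp, hvp⟩ := exists_prim hsplit hvann
  have hnp : n • p ≠ 0 := fun h => hvp (by rw [hv1, mul_smul, h, smul_zero])
  have hnp' : n' • p ≠ 0 := fun h => hvp (by rw [hv2, mul_smul, h, smul_zero])
  have hpnp : SPrimitive S (n • p) := hsplit.2 n hn p hp hnp trivial
  have hpnp' : SPrimitive S (n' • p) := hsplit.2 n' hn' p hp hnp' trivial
  have hass : Assoc σ σ' :=
    hsplit.1.2 (v • p) trivial hvp σ (n • p) σ' (n' • p)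
      ⟨hσ, hpnp, by rw [hv1, mul_smul]⟩ ⟨hσ', hpnp', by rw [hv2, mul_smul]⟩
  obtain ⟨⟨f, -, hf⟩, ⟨e, -, he⟩⟩ := hass
  rw [smul_eq_mul] at hf he
  have hfS : f ∈ S := (hS.2.2 f σ' (hf ▸ hσ)).1
  have heS : e ∈ S := (hS.2.2 e σ (he ▸ hσ')).1
  have hne : n = e * n' := by
    apply cancelR hZR hσ
    calc σ * n = σ' * n' := by rw [← hv1, hv2]
      _ = σ * (e * n') := by rw [he]; ring
  have hn'f : n' = f * n := by
    apply cancelR hZR hσ'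
    calc σ' * n' = σ * n := by rw [← hv1, hv2]
      _ = σ' * (f * n) := by rw [hf]; ring
  exact ⟨e, heS, f, hfS, he, hf, hne, hn'f⟩

lemma primR (hS : Saturated S) (hS' : Saturated S')
    (hsplit : Splits S (Set.univ : Set M))
    (hcompact : CompactlySAtomic S (S' \ AnnSet R M))
    {v : R} (hvS' : v ∈ S') (hvann : v ∉ AnnSet R M)
    {p : M} (hp : SPrimitive S p) (hvp : v • p ≠ 0) (hvpp : SPrimitive S (v • p)) :
    SPrimitive S v := by
  intro u hu z hz
  rw [smul_eq_mul] at hz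
  have hzS' : z ∈ S' := (hS'.2.2 u z (hz ▸ hvS')).2
  have hzann : z ∉ AnnSet R M := fun h => hvann (fun m => by rw [hz, mul_smul, h m, smul_zero])
  have hz0 : z ≠ 0 := ne_zero_of_not_ann hzann
  obtain ⟨ω, w, hω, hw, hzf⟩ := hcompact z ⟨hzS', hzann⟩ hz0
  rw [smul_eq_mul] at hzf
  have hwp0 : w • p ≠ 0 := fun h => hvp (by rw [hz, hzf, mul_smul, mul_smul, h, smul_zero, smul_zero])
  have hwpp : SPrimitive S (w • p) := hsplit.2 w hw p hp hwp0 trivial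
  have hass : Assoc 1 (u * ω) :=
    hsplit.1.2 (v • p) trivial hvp 1 (v • p) (u * ω) (w • p)
      ⟨hS.1, hvpp, (one_smul _ _).symm⟩
      ⟨hS.2.1 u hu ω hω, hwpp, by rw [hz, hzf, mul_smul, mul_smul, smul_smul]⟩
  obtain ⟨⟨c, -, hc⟩, -⟩ := hass
  rw [smul_eq_mul] at hc
  have hunit : u * (ω * c) = 1 := by linear_combination -hc
  have hinv : ω * c ∈ S := (hS.2.2 u (ω * c) (by rw [hunit]; exact hS.1)).2
  refine ⟨⟨ω * c, hinv, ?_⟩, ⟨u, hu, by rw [smul_eq_mul, ← hz]⟩⟩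
  rw [smul_eq_mul, hz]
  linear_combination (-z) * hunit

lemma primProd (hS : Saturated S) (hS' : Saturated S')
    (hsplit : Splits S (Set.univ : Set M))
    (hcompact : CompactlySAtomic S (S' \ AnnSet R M))
    {k n : R} (hk : SPrimitive S k) (hn : SPrimitive S n)
    (hknS' : k * n ∈ S') (hknann : k * n ∉ AnnSet R M) :
    SPrimitive S (k * n) := by
  obtain ⟨p, hp, hknp⟩ := exists_prim hsplit hknann
  have hnp : n • p ≠ 0 := fun h => hknp (by rw [mul_smul, h, smul_zero])
  have hnpp : SPrimitive S (n • p) := hsplit.2 n hn p hp hnp trivial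
  have hknp' : k • (n • p) ≠ 0 := by rw [smul_smul]; exact hknp
  have hkprim : SPrimitive S (k • (n • p)) := hsplit.2 k hk (n • p) hnpp hknp' trivial
  exact primR hS hS' hsplit hcompact hknS' hknann hp hknp (by rw [mul_smul]; exact hkprim)

lemma irred_fact (hS : Saturated S) (hS' : Saturated S')
    (hcompact : CompactlySAtomic S (S' \ AnnSet R M))
    {y : R} (hy : y ∈ S' \ (S ∪ AnnSet R M)) (hyi : Irred y) :
    ∃ n c d : R, SPrimitive S n ∧ n ∈ S' ∧ n ∉ AnnSet R M ∧ y = c * n ∧ n = d * y ∧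
      c ∈ S' ∧ d ∈ S' := by
  obtain ⟨hyS', hy2⟩ := hy
  have hyS : y ∉ S := fun h => hy2 (Or.inl h)
  have hyann : y ∉ AnnSet R M := fun h => hy2 (Or.inr h)
  have hy0 : y ≠ 0 := ne_zero_of_not_ann hyann
  obtain ⟨σ, n, hσ, hn, hyf⟩ := hcompact y ⟨hyS', hyann⟩ hy0
  rw [smul_eq_mul] at hyf
  have hnS' : n ∈ S' := (hS'.2.2 σ n (hyf ▸ hyS')).2
  have hnann : n ∉ AnnSet R M :=
    fun h => hyann (fun m => by rw [hyf, mul_smul, h m, smul_zero])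
  rcases hyi.2 σ n hyf with h | h
  · obtain ⟨-, ⟨d, -, hd⟩⟩ := h
    rw [smul_eq_mul] at hd
    exact absurd (hS.2.2 d y (hd ▸ hσ)).2 hyS
  · obtain ⟨⟨c, -, hc⟩, ⟨d, -, hd⟩⟩ := h
    rw [smul_eq_mul] at hc hd
    exact ⟨n, c, d, hn, hnS', hnann, hc, hd,
      (hS'.2.2 c n (hc ▸ hyS')).1, (hS'.2.2 d y (hd ▸ hnS')).1⟩

lemma P1half (hS : Saturated S) (hS' : Saturated S') (hSS' : S ⊆ S')
    (hsplit : Splits S (Set.univ : Set M))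
    (hcompact : CompactlySAtomic S (S' \ AnnSet R M))
    (hZM : S ∩ ZDiv R M = ∅) (hZR : S ∩ ZDiv R R = ∅)
    {y₁ y₂ : R} (hy₁ : y₁ ∈ S' \ (S ∪ AnnSet R M)) (hy₂ : y₂ ∈ S' \ (S ∪ AnnSet R M))
    (hy₁i : Irred y₁) (hy₂i : Irred y₂)
    {s a : R} (hs : s ∈ S) (hrel : s * y₁ = a * y₂) :
    ∃ r : R, y₁ = r * y₂ := by
  obtain ⟨n₁, c₁, d₁, hn₁, hn₁S', hn₁ann, hyc₁, hnd₁, hc₁S', hd₁S'⟩ :=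
    irred_fact hS hS' hcompact hy₁ hy₁i
  obtain ⟨n₂, c₂, d₂, hn₂, hn₂S', hn₂ann, hyc₂, hnd₂, hc₂S', hd₂S'⟩ :=
    irred_fact hS hS' hcompact hy₂ hy₂i
  have hy₁S' : y₁ ∈ S' := hy₁.1
  have hy₂S' : y₂ ∈ S' := hy₂.1
  have haS' : a ∈ S' :=
    (hS'.2.2 a y₂ (hrel ▸ hS'.2.1 s (hSS' hs) y₁ hy₁S')).1
  set a₂ : R := d₁ * a * c₂ with ha₂def
  have ha₂S' : a₂ ∈ S' := hS'.2.1 (d₁ * a) (hS'.2.1 d₁ hd₁S' a haS') c₂ hc₂S'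
  have hrel2 : s * n₁ = a₂ * n₂ := by
    rw [ha₂def]
    linear_combination s * hnd₁ + d₁ * hrel + d₁ * a * hyc₂
  have hsn₁ann : s * n₁ ∉ AnnSet R M := by
    intro h
    apply hn₁ann
    intro m
    have h2 : s • (n₁ • m) = s • (0 : M) := by rw [← mul_smul, h m, smul_zero]
    exact cancelM hZM hs h2
  have ha₂ann : a₂ ∉ AnnSet R M := by
    intro h
    apply hsn₁ann
    intro m
    rw [hrel2, mul_comm, mul_smul, h m, smul_zero]
  have ha₂0 : a₂ ≠ 0 := ne_zero_of_not_ann ha₂ann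
  obtain ⟨α, k, hα, hk, ha₂f⟩ := hcompact a₂ ⟨ha₂S', ha₂ann⟩ ha₂0
  rw [smul_eq_mul] at ha₂f
  have hkS' : k ∈ S' := (hS'.2.2 α k (ha₂f ▸ ha₂S')).2
  have hknS' : k * n₂ ∈ S' := hS'.2.1 k hkS' n₂ hn₂S'
  have hknann : k * n₂ ∉ AnnSet R M := by
    intro h
    apply hsn₁ann
    intro m
    rw [hrel2, ha₂f, mul_assoc, mul_smul, h m, smul_zero]
  have hknp : SPrimitive S (k * n₂) := primProd hS hS' hsplit hcompact hk hn₂ hknS' hknann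
  obtain ⟨e, heS, f, hfS, hαe, hsf, hn₁e, hknf⟩ :=
    semiR hS hsplit hZM hZR hsn₁ann
      (show IsCompactFactorization S (s * n₁) s n₁ from ⟨hs, hn₁, by rw [smul_eq_mul]⟩)
      (show IsCompactFactorization S (s * n₁) α (k * n₂) from
        ⟨hα, hknp, by rw [smul_eq_mul, hrel2, ha₂f, mul_assoc]⟩)
  exact ⟨c₁ * e * k * d₂, by linear_combination hyc₁ + c₁ * hn₁e + c₁ * (e * k) * hnd₂⟩

lemma P2 (hS : Saturated S) (hS' : Saturated S') (hSS' : S ⊆ S')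
    (hsplit : Splits S (Set.univ : Set M))
    (hcompact : CompactlySAtomic S (S' \ AnnSet R M))
    (hZM : S ∩ ZDiv R M = ∅)
    {m₁ m₂ : M} (hm₁ : m₁ ≠ 0) (hm₂p : SPrimitive S' m₂)
    {s s' : R} (hs : s ∈ S) (hs' : s' ∈ S') (hrel : s • m₁ = s' • m₂) :
    ∃ σ' ∈ S', m₁ = σ' • m₂ := by
  have hx0 : s • m₁ ≠ 0 := smulneM hZM hs hm₁
  have hs'ann : s' ∉ AnnSet R M := fun h => hx0 (by rw [hrel, h m₂])
  have hs'0 : s' ≠ 0 := ne_zero_of_not_ann hs'ann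
  obtain ⟨σ, n, hσ, hn, hs'f⟩ := hcompact s' ⟨hs', hs'ann⟩ hs'0
  rw [smul_eq_mul] at hs'f
  have hnS' : n ∈ S' := (hS'.2.2 σ n (hs'f ▸ hs')).2
  have hm₂0 : m₂ ≠ 0 := fun h => hx0 (by rw [hrel, h, smul_zero])
  obtain ⟨τ₂, p₂, hτ₂, hp₂, hm₂f⟩ := hsplit.1.1 m₂ trivial hm₂0
  obtain ⟨τ₁, p₁, hτ₁, hp₁, hm₁f⟩ := hsplit.1.1 m₁ trivial hm₁
  have key : s' • m₂ = (σ * τ₂) • (n • p₂) := by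
    rw [hs'f, hm₂f, mul_smul, smul_comm n τ₂, ← mul_smul]
  have hnp₂0 : n • p₂ ≠ 0 := fun h => hx0 (by rw [hrel, key, h, smul_zero])
  have hnp₂p : SPrimitive S (n • p₂) := hsplit.2 n hn p₂ hp₂ hnp₂0 trivial
  have hass : Assoc (s * τ₁) (σ * τ₂) :=
    hsplit.1.2 (s • m₁) trivial hx0 (s * τ₁) p₁ (σ * τ₂) (n • p₂)
      ⟨hS.2.1 s hs τ₁ hτ₁, hp₁, by rw [hm₁f, mul_smul]⟩
      ⟨hS.2.1 σ hσ τ₂ hτ₂, hnp₂p, by rw [hrel, key]⟩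
  obtain ⟨-, ⟨d, -, hd⟩⟩ := hass
  rw [smul_eq_mul] at hd
  have hdS : d ∈ S := (hS.2.2 d (s * τ₁) (hd ▸ hS.2.1 σ hσ τ₂ hτ₂)).1
  have hp₁e : p₁ = (d * n) • p₂ := by
    apply cancelM hZM (hS.2.1 s hs τ₁ hτ₁)
    calc (s * τ₁) • p₁ = s • m₁ := by rw [hm₁f, smul_smul]
      _ = (σ * τ₂) • (n • p₂) := by rw [hrel, key]
      _ = ((σ * τ₂) * n) • p₂ := smul_smul _ _ _
      _ = ((s * τ₁) * (d * n)) • p₂ := by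
          rw [show (σ * τ₂) * n = (s * τ₁) * (d * n) by rw [hd]; ring]
      _ = (s * τ₁) • ((d * n) • p₂) := (smul_smul _ _ _).symm
  obtain ⟨⟨g, hgS', hg⟩, -⟩ := hm₂p τ₂ (hSS' hτ₂) p₂ hm₂f
  refine ⟨τ₁ * (d * n) * g, ?_, ?_⟩
  · exact hS'.2.1 (τ₁ * (d * n)) (hS'.2.1 τ₁ (hSS' hτ₁) (d * n)
      (hS'.2.1 d (hSS' hdS) n hnS')) g hgS'
  · rw [hm₁f, hp₁e, hg, smul_smul, smul_smul]

end AuxProof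

theorem statement13 {R : Type*} [CommRing R] {M : Type*} [AddCommGroup M] [Module R M]
    [Nontrivial M] (S S' : Set R) (hS : Saturated S) (hS' : Saturated S') (hSS' : S ⊆ S')
    (hsplit : Splits S (Set.univ : Set M))
    (hcompact : CompactlySAtomic S (S' \ AnnSet R M))
    (hZM : S ∩ ZDiv R M = ∅) (hZR : S ∩ ZDiv R R = ∅)
    (y₁ y₂ : R) (hy₁ : y₁ ∈ S' \ (S ∪ AnnSet R M)) (hy₂ : y₂ ∈ S' \ (S ∪ AnnSet R M))
    (hy₁i : Irred y₁) (hy₂i : Irred y₂)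
    (m₁ m₂ : M) (hm₁ : m₁ ≠ 0) (hm₂ : m₂ ≠ 0)
    (hm₁p : SPrimitive S' m₁) (hm₂p : SPrimitive S' m₂) :
    (Assoc (algebraMap R (Localization hS.submonoid) y₁)
        (algebraMap R (Localization hS.submonoid) y₂) ↔ Assoc y₁ y₂) ∧
    (SAssoc (locT hS S') (LocalizedModule.mkLinearMap hS.submonoid M m₁)
        (LocalizedModule.mkLinearMap hS.submonoid M m₂) ↔ SAssoc S' m₁ m₂) := by
  constructor
  · -- ring part
    constructor
    · rintro ⟨⟨z, -, hz⟩, ⟨w, -, hw⟩⟩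
      rw [smul_eq_mul] at hz hw
      have extract : ∀ (u v : R) (z : Localization hS.submonoid),
          algebraMap R (Localization hS.submonoid) u =
            z * algebraMap R (Localization hS.submonoid) v →
          ∃ s ∈ S, ∃ a : R, s * u = a * v := by
        intro u v z h
        obtain ⟨⟨x, t⟩, hmk⟩ := IsLocalization.mk'_surjective hS.submonoid z
        have hmk : IsLocalization.mk' (Localization hS.submonoid) x t = z := hmk
        have h2 : algebraMap R (Localization hS.submonoid) ((t : R) * u) =
            algebraMap R (Localization hS.submonoid) (x * v) := by
          rw [map_mul, map_mul, h, ← hmk, ← mul_assoc,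
            mul_comm (algebraMap R (Localization hS.submonoid) (t : R))
              (IsLocalization.mk' _ x t),
            IsLocalization.mk'_spec]
        obtain ⟨c, hc⟩ := (IsLocalization.eq_iff_exists hS.submonoid _).mp h2
        exact ⟨(c : R) * (t : R), hS.2.1 _ c.2 _ t.2, (c : R) * x, by linear_combination hc⟩
      obtain ⟨s, hsS, a, hra⟩ := extract y₁ y₂ z hz
      obtain ⟨t, htS, b, hrb⟩ := extract y₂ y₁ w hw
      obtain ⟨r, hr⟩ := P1half hS hS' hSS' hsplit hcompact hZM hZR hy₁ hy₂ hy₁i hy₂i hsS hra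
      obtain ⟨r', hr'⟩ := P1half hS hS' hSS' hsplit hcompact hZM hZR hy₂ hy₁ hy₂i hy₁i htS hrb
      exact ⟨⟨r, trivial, by rw [smul_eq_mul]; exact hr⟩,
             ⟨r', trivial, by rw [smul_eq_mul]; exact hr'⟩⟩
    · rintro ⟨⟨r, -, hr⟩, ⟨r', -, hr'⟩⟩
      rw [smul_eq_mul] at hr hr'
      exact ⟨⟨algebraMap R _ r, trivial, by rw [smul_eq_mul, ← map_mul, ← hr]⟩,
             ⟨algebraMap R _ r', trivial, by rw [smul_eq_mul, ← map_mul, ← hr']⟩⟩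
  · -- module part
    constructor
    · rintro ⟨⟨z, hzT, hz⟩, ⟨w, hwT, hw⟩⟩
      have extract : ∀ (u v : M) (z : Localization hS.submonoid), z ∈ locT hS S' →
          LocalizedModule.mkLinearMap hS.submonoid M u =
            z • LocalizedModule.mkLinearMap hS.submonoid M v →
          ∃ s ∈ S, ∃ s' ∈ S', s • u = s' • v := by
        intro u v z hzT h
        obtain ⟨s', hs', t, rfl⟩ := hzT
        rw [LocalizedModule.mkLinearMap_apply, LocalizedModule.mkLinearMap_apply,
          LocalizedModule.mk_smul_mk] at h
        obtain ⟨c, hc⟩ := LocalizedModule.mk_eq.mp h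
        simp only [Submonoid.smul_def, Submonoid.coe_mul, Submonoid.coe_one, one_smul,
          mul_one, smul_smul] at hc
        refine ⟨(c : R) * (t : R), hS.2.1 _ c.2 _ t.2, (c : R) * s',
          hS'.2.1 _ (hSS' c.2) _ hs', ?_⟩
        exact hc
      obtain ⟨s, hsS, s'', hs'', hrel1⟩ := extract m₁ m₂ z hzT hz
      obtain ⟨t, htS, t'', ht'', hrel2⟩ := extract m₂ m₁ w hwT hw
      obtain ⟨σ', hσ', h1⟩ := P2 hS hS' hSS' hsplit hcompact hZM hm₁ hm₂p hsS hs'' hrel1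
      obtain ⟨τ', hτ', h2⟩ := P2 hS hS' hSS' hsplit hcompact hZM hm₂ hm₁p htS ht'' hrel2
      exact ⟨⟨σ', hσ', h1⟩, ⟨τ', hτ', h2⟩⟩
    · rintro ⟨⟨σ', hσ', h1⟩, ⟨τ', hτ', h2⟩⟩
      refine ⟨⟨Localization.mk σ' 1, ⟨σ', hσ', 1, rfl⟩, ?_⟩,
              ⟨Localization.mk τ' 1, ⟨τ', hτ', 1, rfl⟩, ?_⟩⟩
      · rw [LocalizedModule.mkLinearMap_apply, LocalizedModule.mkLinearMap_apply,
          LocalizedModule.mk_smul_mk, mul_one, ← h1]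
      · rw [LocalizedModule.mkLinearMap_apply, LocalizedModule.mkLinearMap_apply,
          LocalizedModule.mk_smul_mk, mul_one, ← h2]

end FactorizationPaper
end

section
/- Let A ⊆ B be integral domains, R = A + XB[X], S = (U(B) ∩ A) ∪ {uX^n : u ∈ U(B), n ≥ 1}, S_0 = U(B) ∩ A, and K the quotient field of A. Then S splits R (R viewed as an R-module, S splitting the subset E = R) if and only if the following three conditions all hold: (1) S_0 splits A (A viewed as an A-module); (2) for every b ∈ B there are u ∈ U(B) and a ∈ A with b = u·a; (3) U(B) ∩ K ⊆ A_{S_0}, the localization of A at S_0. In particular, if B is a field, or if S_0 is any A-splitting saturated multiplicatively closed subset of A and B = A_{S_0}, then S splits R. -/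
namespace FactorizationPaper

variable {R : Type*} [CommRing R]

section Proof16

set_option linter.unusedSectionVars false

open Polynomial

variable {B : Type*} [CommRing B] [IsDomain B] {A : Subring B}

lemma mem_AXBX {p : Polynomial B} : p ∈ AXBX B A ↔ p.coeff 0 ∈ A := Iff.rfl

lemma coeq {f g : AXBX B A} (h : (f : Polynomial B) = g) : f = g := Subtype.ext h

lemma smul_coe (s n : AXBX B A) :
    ((s • n : AXBX B A) : Polynomial B) = (s : Polynomial B) * n := by
  rw [smul_eq_mul]; rfl

lemma smulA_coe (s a : A) : ((s • a : A) : B) = (s : B) * a := by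
  rw [smul_eq_mul]; rfl

lemma coe_nzR {f : AXBX B A} (h : f ≠ 0) : (f : Polynomial B) ≠ 0 := by
  simpa [Ne, ZeroMemClass.coe_eq_zero] using h

lemma coe_nzA {a : A} (h : a ≠ 0) : (a : B) ≠ 0 := by
  simpa [Ne, ZeroMemClass.coe_eq_zero] using h

lemma exists_ord (p : Polynomial B) (hp : p ≠ 0) :
    ∃ (k : ℕ) (q : Polynomial B), p = X ^ k * q ∧ q.coeff 0 ≠ 0 := by
  suffices H : ∀ (n : ℕ) (p : Polynomial B), p ≠ 0 → p.natDegree = n →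
      ∃ (k : ℕ) (q : Polynomial B), p = X ^ k * q ∧ q.coeff 0 ≠ 0 from H _ p hp rfl
  intro n
  induction n using Nat.strong_induction_on with
  | _ n ih =>
    intro p hp hn
    by_cases h0 : p.coeff 0 = 0
    · have hdvd : p = X * p.divX := by
        conv_lhs => rw [← p.X_mul_divX_add]
        simp [h0]
      have hdX : p.divX ≠ 0 := by
        intro h; rw [h, mul_zero] at hdvd; exact hp hdvd
      have hdeg : p.natDegree = p.divX.natDegree + 1 := by
        conv_lhs => rw [hdvd]
        rw [natDegree_mul X_ne_zero hdX, natDegree_X]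
        omega
      have hlt : p.divX.natDegree < n := by omega
      obtain ⟨k, q, hq, hq0⟩ := ih _ hlt p.divX hdX rfl
      exact ⟨k + 1, q, by rw [hdvd, hq]; ring, hq0⟩
    · exact ⟨0, p, by simp, h0⟩

lemma S_form {s : AXBX B A} (hs : s ∈ Sset B A) :
    ∃ (c : B) (k : ℕ), IsUnit c ∧ (s : Polynomial B) = C c * X ^ k ∧ (k = 0 → c ∈ A) := by
  rcases hs with ⟨u, hu, huA, hC⟩ | ⟨u, hu, n, hn, hC⟩
  · exact ⟨u, 0, hu, by simp [hC], fun _ => huA⟩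
  · exact ⟨u, n, hu, hC, fun h => by omega⟩

lemma S_coe_ne {s : AXBX B A} (hs : s ∈ Sset B A) : (s : Polynomial B) ≠ 0 := by
  obtain ⟨c, k, hc, hey, -⟩ := S_form hs
  rw [hey]
  exact mul_ne_zero (C_ne_zero.mpr hc.ne_zero) (pow_ne_zero _ X_ne_zero)

lemma prim_up (n : AXBX B A) (c : A) (h0 : (n : Polynomial B).coeff 0 = c)
    (hc : (c : B) ≠ 0) (hp : SPrimitive (S0set B A) c) :
    SPrimitive (Sset B A) n := by
  intro s hs m hm
  have hm' : (n : Polynomial B) = (s : Polynomial B) * m := by rw [hm, smul_coe]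
  obtain ⟨cs, k, hcs, hsf, hk⟩ := S_form hs
  rcases Nat.eq_zero_or_pos k with hk0 | hkpos
  · have hcsA : cs ∈ A := hk hk0
    rw [hk0, pow_zero, mul_one] at hsf
    have e0 : (c : B) = cs * (m : Polynomial B).coeff 0 := by
      rw [← h0, hm', Polynomial.mul_coeff_zero, hsf, coeff_C_zero]
    have hm0ne : (m : Polynomial B).coeff 0 ≠ 0 := by
      intro h; rw [h, mul_zero] at e0; exact hc e0
    obtain ⟨⟨σ, hσ0, hσ⟩, -⟩ := hp ⟨cs, hcsA⟩ hcs ⟨(m : Polynomial B).coeff 0, m.2⟩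
      (Subtype.ext (by rw [smulA_coe]; exact e0))
    have e1 : (m : Polynomial B).coeff 0 = (σ : B) * c := by
      have := congrArg (Subtype.val) hσ
      rwa [smulA_coe] at this
    have hσcs : (σ : B) * cs = 1 := by
      apply mul_right_cancel₀ hm0ne
      rw [one_mul, mul_assoc, ← e0, ← e1]
    refine ⟨⟨⟨C (σ : B), by simpa [mem_AXBX] using σ.2⟩,
        Or.inl ⟨σ, IsUnit.of_mul_eq_one _ hσcs, σ.2, rfl⟩, ?_⟩, ⟨s, hs, hm⟩⟩
    apply coeq
    rw [smul_coe]
    show (m : Polynomial B) = C (σ : B) * n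
    rw [hm', hsf, ← mul_assoc, ← C_mul, hσcs, C_1, one_mul]
  · exfalso
    apply hc
    rw [← h0, hm', Polynomial.mul_coeff_zero, hsf, Polynomial.mul_coeff_zero, coeff_C_zero,
      coeff_X_pow, if_neg (by omega : ¬ (0 = k))]
    ring

lemma prim_down (n : AXBX B A) (hn : SPrimitive (Sset B A) n) (c : A)
    (h0 : (n : Polynomial B).coeff 0 = c) (hc : (c : B) ≠ 0) :
    SPrimitive (S0set B A) c := by
  intro v hv a ha
  obtain ⟨U, hU⟩ := hv
  have hca : (c : B) = (v : B) * a := by rw [congrArg Subtype.val ha, smulA_coe]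
  have hnne : (n : Polynomial B) ≠ 0 := fun h => hc (by rw [← h0, h, Polynomial.coeff_zero])
  have hn_mem : (C ((U⁻¹ : Bˣ) : B) * (n : Polynomial B)).coeff 0 ∈ A := by
    rw [Polynomial.mul_coeff_zero, coeff_C_zero, h0, hca, ← hU, ← mul_assoc, Units.inv_mul,
      one_mul]
    exact a.2
  have hnm : n = (⟨C (v : B), by simpa [mem_AXBX] using v.2⟩ : AXBX B A) •
      (⟨C ((U⁻¹ : Bˣ) : B) * (n : Polynomial B), hn_mem⟩ : AXBX B A) := by
    apply coeq
    rw [smul_coe]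
    show (n : Polynomial B) = C (v : B) * (C ((U⁻¹ : Bˣ) : B) * n)
    rw [← mul_assoc, ← C_mul, ← hU, Units.mul_inv, C_1, one_mul]
  obtain ⟨⟨σ, hσS, h1⟩, -⟩ := hn _ (Or.inl ⟨(v : B), ⟨U, hU⟩, v.2, rfl⟩) _ hnm
  have h2 : (σ : Polynomial B) * n = C ((U⁻¹ : Bˣ) : B) * n := by
    rw [← smul_coe, ← h1]
  have h3 : (σ : Polynomial B) = C ((U⁻¹ : Bˣ) : B) := mul_right_cancel₀ hnne h2
  obtain ⟨cs, k, hcs, hsf, hkA⟩ := S_form hσS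
  rcases Nat.eq_zero_or_pos k with hk0 | hkpos
  · rw [hk0, pow_zero, mul_one] at hsf
    have hcseq : cs = ((U⁻¹ : Bˣ) : B) := C_injective (hsf.symm.trans h3)
    have hcsA : cs ∈ A := hkA hk0
    refine ⟨⟨⟨cs, hcsA⟩, show IsUnit ((⟨cs, hcsA⟩ : A) : B) from hcs, ?_⟩, ⟨v, ⟨U, hU⟩, ha⟩⟩
    apply Subtype.ext
    rw [smulA_coe]
    show (a : B) = cs * c
    rw [hcseq, hca, ← hU, ← mul_assoc, Units.inv_mul, one_mul]
  · exfalso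
    have e := congrArg (fun p => Polynomial.coeff p 0) (hsf.symm.trans h3)
    simp only [Polynomial.mul_coeff_zero, coeff_C_zero, coeff_X_pow] at e
    rw [if_neg (by omega : ¬ (0 = k)), mul_zero] at e
    exact (U⁻¹ : Bˣ).ne_zero e.symm

lemma prim_coeff_ne (h2 : ∀ b : B, ∃ u : B, IsUnit u ∧ ∃ a : A, b = u * a)
    (g : AXBX B A) (hg : SPrimitive (Sset B A) g) (hgz : g ≠ 0) :
    (g : Polynomial B).coeff 0 ≠ 0 := by
  intro h0
  obtain ⟨k, q, hq, hq0⟩ := exists_ord (g : Polynomial B) (coe_nzR hgz)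
  have hk : k ≠ 0 := by
    rintro rfl
    rw [pow_zero, one_mul] at hq
    rw [hq] at h0
    exact hq0 h0
  obtain ⟨u, hu, a, ha⟩ := h2 (q.coeff 0)
  obtain ⟨U, hU⟩ := hu
  have hn_mem : (C ((U⁻¹ : Bˣ) : B) * q).coeff 0 ∈ A := by
    rw [Polynomial.mul_coeff_zero, coeff_C_zero, ha, ← hU, ← mul_assoc, Units.inv_mul, one_mul]
    exact a.2
  have hs_mem : (C u * X ^ k : Polynomial B).coeff 0 ∈ A := by
    rw [Polynomial.mul_coeff_zero, coeff_X_pow, if_neg (by omega : ¬ (0 = k)), mul_zero]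
    exact A.zero_mem
  have hgn : g = (⟨C u * X ^ k, hs_mem⟩ : AXBX B A) •
      (⟨C ((U⁻¹ : Bˣ) : B) * q, hn_mem⟩ : AXBX B A) := by
    apply coeq
    rw [smul_coe]
    show (g : Polynomial B) = (C u * X ^ k) * (C ((U⁻¹ : Bˣ) : B) * q)
    rw [← hU]
    calc (g : Polynomial B) = X ^ k * q := hq
    _ = (C ((U : B) * ((U⁻¹ : Bˣ) : B))) * (X ^ k * q) := by
        rw [Units.mul_inv, C_1, one_mul]
    _ = (C (U : B) * X ^ k) * (C ((U⁻¹ : Bˣ) : B) * q) := by rw [C_mul]; ring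
  obtain ⟨⟨σ, hσS, hσ⟩, -⟩ := hg _ (Or.inr ⟨u, ⟨U, hU⟩, k, by omega, rfl⟩) _ hgn
  have e : ((U⁻¹ : Bˣ) : B) * q.coeff 0 = 0 := by
    have h4 := congrArg (fun f : AXBX B A => (f : Polynomial B).coeff 0) hσ
    simp only [smul_coe, Polynomial.mul_coeff_zero] at h4
    rw [h0, mul_zero] at h4
    simpa using h4
  rcases mul_eq_zero.mp e with h | h
  · exact (U⁻¹ : Bˣ).ne_zero h
  · exact hq0 h


noncomputable def CR (a : A) : AXBX B A := ⟨C (a : B), by rw [mem_AXBX, coeff_C_zero]; exact a.2⟩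

@[simp] lemma CR_coe (a : A) : ((CR a : AXBX B A) : Polynomial B) = C (a : B) := rfl

@[simp] lemma CR_coeff0 (a : A) : ((CR a : AXBX B A) : Polynomial B).coeff 0 = a :=
  coeff_C_zero

lemma CR_ne {a : A} (h : a ≠ 0) : (CR a : AXBX B A) ≠ 0 := by
  intro he
  exact coe_nzA h (C_eq_zero.mp (by simpa using congrArg Subtype.val he))

lemma CR_mem_S {a : A} (h : IsUnit (a : B)) : (CR a : AXBX B A) ∈ Sset B A :=
  Or.inl ⟨a, h, a.2, rfl⟩

lemma CR_smul (r m : A) : (CR r • CR m : AXBX B A) = CR (r • m) := by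
  apply coeq
  rw [smul_coe]
  show (C (r : B)) * C (m : B) = C ((r • m : A) : B)
  rw [smulA_coe, C_mul]

lemma fwd1 (hs : Splits (Sset B A) (Set.univ : Set (AXBX B A))) :
    Splits (S0set B A) (Set.univ : Set A) := by
  obtain ⟨⟨hcomp, huniq⟩, hclause⟩ := hs
  refine ⟨⟨?_, ?_⟩, ?_⟩
  · -- compactly S0-atomic
    intro a _ ha
    obtain ⟨s, n, hsS, hnp, hf⟩ := hcomp (CR a) (Set.mem_univ _) (CR_ne ha)
    obtain ⟨c, k, hc, hsf, hk⟩ := S_form hsS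
    have e0 : (a : B) = (s : Polynomial B).coeff 0 * (n : Polynomial B).coeff 0 := by
      have := congrArg (fun f : AXBX B A => (f : Polynomial B).coeff 0) hf
      simpa [smul_coe, Polynomial.mul_coeff_zero] using this
    rcases Nat.eq_zero_or_pos k with hk0 | hkpos
    · have hcA : c ∈ A := hk hk0
      rw [hk0, pow_zero, mul_one] at hsf
      have e0' : (a : B) = c * (n : Polynomial B).coeff 0 := by
        rw [e0, hsf, coeff_C_zero]
      have hn0 : (n : Polynomial B).coeff 0 ≠ 0 := by
        intro h; exact coe_nzA ha (by rw [e0', h, mul_zero])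
      refine ⟨⟨c, hcA⟩, ⟨(n : Polynomial B).coeff 0, n.2⟩, hc,
        prim_down n hnp _ rfl hn0, ?_⟩
      exact Subtype.ext (by rw [smulA_coe]; exact e0')
    · exfalso
      apply coe_nzA ha
      rw [e0, hsf, Polynomial.mul_coeff_zero, coeff_X_pow, if_neg (by omega : ¬ (0 = k))]
      ring
  · -- semi-factorability (uniqueness)
    intro a _ ha t n t' n' h1 h2
    obtain ⟨htS, hnp, he⟩ := h1
    obtain ⟨ht'S, hn'p, he'⟩ := h2
    have hnne : (n : B) ≠ 0 := by
      intro h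
      exact coe_nzA ha (by rw [congrArg Subtype.val he, smulA_coe, h, mul_zero])
    have hn'ne : (n' : B) ≠ 0 := by
      intro h
      exact coe_nzA ha (by rw [congrArg Subtype.val he', smulA_coe, h, mul_zero])
    have l1 : IsCompactFactorization (Sset B A) (CR a) (CR t) (CR n) := by
      refine ⟨CR_mem_S htS, prim_up (CR n) n (CR_coeff0 n) hnne hnp, ?_⟩
      rw [CR_smul, ← he]
    have l2 : IsCompactFactorization (Sset B A) (CR a) (CR t') (CR n') := by
      refine ⟨CR_mem_S ht'S, prim_up (CR n') n' (CR_coeff0 n') hn'ne hn'p, ?_⟩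
      rw [CR_smul, ← he']
    obtain ⟨⟨r, -, hr⟩, ⟨r', -, hr'⟩⟩ :=
      huniq (CR a) (Set.mem_univ _) (CR_ne ha) _ _ _ _ l1 l2
    refine ⟨⟨⟨(r : Polynomial B).coeff 0, r.2⟩, Set.mem_univ _, ?_⟩,
        ⟨⟨(r' : Polynomial B).coeff 0, r'.2⟩, Set.mem_univ _, ?_⟩⟩
    · apply Subtype.ext
      rw [smulA_coe]
      have := congrArg (fun f : AXBX B A => (f : Polynomial B).coeff 0) hr
      simpa [smul_coe, Polynomial.mul_coeff_zero] using this
    · apply Subtype.ext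
      rw [smulA_coe]
      have := congrArg (fun f : AXBX B A => (f : Polynomial B).coeff 0) hr'
      simpa [smul_coe, Polynomial.mul_coeff_zero] using this
  · -- splitting clause
    intro r hrp m hmp hne _
    have hrne : r ≠ 0 := by rintro rfl; exact hne (zero_smul _ _)
    have hmne : m ≠ 0 := by rintro rfl; exact hne (smul_zero _)
    have h1 := prim_up (CR r) r (CR_coeff0 r) (coe_nzA hrne) hrp
    have h2 := prim_up (CR m) m (CR_coeff0 m) (coe_nzA hmne) hmp
    have hP := hclause (CR r) h1 (CR m) h2
      (by rw [CR_smul]; exact CR_ne hne) (Set.mem_univ _)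
    rw [CR_smul] at hP
    exact prim_down _ hP (r • m) (CR_coeff0 _) (coe_nzA hne)

lemma coeff_mul_X_one (p : Polynomial B) : (p * X).coeff 1 = p.coeff 0 := by
  simpa using Polynomial.coeff_mul_X p 0

lemma fwd2 (hs : Splits (Sset B A) (Set.univ : Set (AXBX B A))) :
    ∀ b : B, ∃ u : B, IsUnit u ∧ ∃ a : A, b = u * a := by
  by_contra hcon
  push_neg at hcon
  obtain ⟨b, hb⟩ := hcon
  have hbne : b ≠ 0 := by
    intro h
    exact hb 1 isUnit_one 0 (by simp [h])
  have hF_mem : (C b * X : Polynomial B).coeff 0 ∈ A := by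
    rw [Polynomial.mul_coeff_zero, coeff_X_zero, mul_zero]
    exact A.zero_mem
  have hFne : (⟨C b * X, hF_mem⟩ : AXBX B A) ≠ 0 := by
    intro h
    have e := congrArg Subtype.val h
    simp only [ZeroMemClass.coe_zero] at e
    have e2 := congrArg (fun p => Polynomial.coeff p 1) e
    simp only [coeff_C_mul, coeff_X_one, mul_one, Polynomial.coeff_zero] at e2
    exact hbne e2
  obtain ⟨s, g, hsS, hgp, hF⟩ := hs.1.1 _ (Set.mem_univ _) hFne
  obtain ⟨c, k, hc, hsf, hk⟩ := S_form hsS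
  obtain ⟨Uc, hUc⟩ := hc
  have hFeq : C b * X = (C c * (g : Polynomial B)) * X ^ k := by
    have e := congrArg Subtype.val hF
    rw [smul_coe, hsf] at e
    have e2 : C b * X = C c * X ^ k * (g : Polynomial B) := e
    rw [e2]; ring
  rcases Nat.eq_zero_or_pos k with hk0 | hkpos
  · -- constant case : extract primitive b' X and contradict with its square
    rw [hk0, pow_zero, mul_one] at hFeq
    obtain ⟨w, hwdef⟩ : ∃ w : B, w = ((Uc⁻¹ : Bˣ) : B) * b := ⟨_, rfl⟩
    have hcne : (C c : Polynomial B) ≠ 0 :=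
      C_ne_zero.mpr (by rw [← hUc]; exact Uc.ne_zero)
    have hgeq : (g : Polynomial B) = C w * X := by
      apply mul_left_cancel₀ hcne
      rw [← hFeq, hwdef, ← mul_assoc, ← C_mul, ← hUc, ← mul_assoc, Units.mul_inv, one_mul]
    have hwne : w ≠ 0 := by
      rw [hwdef]; exact mul_ne_zero (Uc⁻¹ : Bˣ).ne_zero hbne
    have hT_mem : (X : Polynomial B).coeff 0 ∈ A := by
      rw [coeff_X_zero]; exact A.zero_mem
    have hTS : (⟨X, hT_mem⟩ : AXBX B A) ∈ Sset B A :=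
      Or.inr ⟨1, isUnit_one, 1, le_refl 1, by rw [C_1, one_mul, pow_one]⟩
    have hN_mem : (C (w * w) * X : Polynomial B).coeff 0 ∈ A := by
      rw [Polynomial.mul_coeff_zero, coeff_X_zero, mul_zero]; exact A.zero_mem
    have hgne : (g : Polynomial B) ≠ 0 := by
      rw [hgeq]; exact mul_ne_zero (C_ne_zero.mpr hwne) X_ne_zero
    have hggne : g • g ≠ (0 : AXBX B A) := by
      intro h
      have e := congrArg Subtype.val h
      rw [smul_coe] at e
      simp only [ZeroMemClass.coe_zero] at e
      exact (mul_ne_zero hgne hgne) e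
    have hprod := hs.2 g hgp g hgp hggne (Set.mem_univ _)
    have hgg : g • g = (⟨X, hT_mem⟩ : AXBX B A) • ⟨C (w * w) * X, hN_mem⟩ := by
      apply coeq
      rw [smul_coe, smul_coe]
      show (g : Polynomial B) * (g : Polynomial B) = X * (C (w * w) * X)
      rw [hgeq, C_mul]; ring
    obtain ⟨⟨σ, hσS, hσ⟩, -⟩ := hprod _ hTS _ hgg
    have e := congrArg (fun f : AXBX B A => (f : Polynomial B).coeff 1) hσ
    simp only [smul_coe] at e
    have hgg2 : (g : Polynomial B) * (g : Polynomial B) = C (w * w) * X ^ 2 := by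
      rw [hgeq, C_mul]; ring
    rw [hgg2] at e
    have eL : (C (w * w) * (X : Polynomial B)).coeff 1 = w * w := by
      rw [coeff_C_mul, coeff_X_one, mul_one]
    have eR : ((σ : Polynomial B) * (C (w * w) * X ^ 2)).coeff 1 = 0 := by
      rw [show (σ : Polynomial B) * (C (w * w) * X ^ 2) =
        ((σ : Polynomial B) * C (w * w)) * X ^ 2 by ring,
        coeff_mul_X_pow', if_neg (by omega)]
    rw [eL, eR] at e
    exact hwne (mul_self_eq_zero.mp e)
  · -- k ≥ 1 : direct contradiction via coeff 1
    have e1 : (C b * (X : Polynomial B)).coeff 1 =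
        ((C c * (g : Polynomial B)) * X ^ k).coeff 1 :=
      congrArg (fun p => Polynomial.coeff p 1) hFeq
    have eL : (C b * (X : Polynomial B)).coeff 1 = b := by
      rw [coeff_C_mul, coeff_X_one, mul_one]
    rw [eL, coeff_mul_X_pow'] at e1
    by_cases hk1 : k = 1
    · rw [if_pos (by omega), hk1] at e1
      rw [show 1 - 1 = 0 from rfl, Polynomial.mul_coeff_zero, coeff_C_zero] at e1
      exact hb c ⟨Uc, hUc⟩ ⟨(g : Polynomial B).coeff 0, g.2⟩ e1
    · rw [if_neg (by omega)] at e1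
      exact hbne e1

lemma fwd3 (hs : Splits (Sset B A) (Set.univ : Set (AXBX B A))) :
    ∀ b : B, IsUnit b → (∃ a a' : A, (a' : B) ≠ 0 ∧ b * a' = a) →
      ∃ a s : A, IsUnit (s : B) ∧ b * s = a := by
  rintro b hb ⟨a, a', ha', hba⟩
  have h0 := fwd1 hs
  have hane : (a : B) ≠ 0 := by rw [← hba]; exact mul_ne_zero hb.ne_zero ha'
  have ha'0 : a' ≠ 0 := fun h => ha' (by rw [h]; rfl)
  have ha0 : a ≠ 0 := fun h => hane (by rw [h]; rfl)
  obtain ⟨t, c, htS0, hcp, htc⟩ := h0.1.1 a' (Set.mem_univ _) ha'0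
  obtain ⟨t', c', ht'S0, hc'p, htc'⟩ := h0.1.1 a (Set.mem_univ _) ha0
  have hcne : (c : B) ≠ 0 := by
    intro h
    exact ha' (by rw [congrArg Subtype.val htc, smulA_coe, h, mul_zero])
  have hc'ne : (c' : B) ≠ 0 := by
    intro h
    exact hane (by rw [congrArg Subtype.val htc', smulA_coe, h, mul_zero])
  have hFmem : (C (a : B) * X : Polynomial B).coeff 0 ∈ A := by
    rw [Polynomial.mul_coeff_zero, coeff_X_zero, mul_zero]; exact A.zero_mem
  have hs1mem : (C (b * (t : B)) * X : Polynomial B).coeff 0 ∈ A := by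
    rw [Polynomial.mul_coeff_zero, coeff_X_zero, mul_zero]; exact A.zero_mem
  have hs2mem : (C ((t' : B)) * X : Polynomial B).coeff 0 ∈ A := by
    rw [Polynomial.mul_coeff_zero, coeff_X_zero, mul_zero]; exact A.zero_mem
  have hFne : (⟨C (a : B) * X, hFmem⟩ : AXBX B A) ≠ 0 := by
    intro h
    have e := congrArg Subtype.val h
    simp only [ZeroMemClass.coe_zero] at e
    have e2 := congrArg (fun p => Polynomial.coeff p 1) e
    simp only [coeff_C_mul, coeff_X_one, mul_one, Polynomial.coeff_zero] at e2
    exact hane e2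
  have ha_eq : (a : B) = b * (t : B) * (c : B) := by
    rw [← hba, congrArg Subtype.val htc, smulA_coe, mul_assoc]
  have ha_eq' : (a : B) = (t' : B) * (c' : B) := by
    rw [congrArg Subtype.val htc', smulA_coe]
  have l1 : IsCompactFactorization (Sset B A) (⟨C (a : B) * X, hFmem⟩ : AXBX B A)
      ⟨C (b * (t : B)) * X, hs1mem⟩ (CR c) := by
    refine ⟨Or.inr ⟨b * t, hb.mul htS0, 1, le_refl 1, by rw [pow_one]⟩,
      prim_up (CR c) c (CR_coeff0 c) hcne hcp, ?_⟩
    apply coeq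
    rw [smul_coe]
    show C (a : B) * X = (C (b * (t : B)) * X) * C (c : B)
    rw [ha_eq, C_mul]; ring
  have l2 : IsCompactFactorization (Sset B A) (⟨C (a : B) * X, hFmem⟩ : AXBX B A)
      ⟨C ((t' : B)) * X, hs2mem⟩ (CR c') := by
    refine ⟨Or.inr ⟨(t' : B), ht'S0, 1, le_refl 1, by rw [pow_one]⟩,
      prim_up (CR c') c' (CR_coeff0 c') hc'ne hc'p, ?_⟩
    apply coeq
    rw [smul_coe]
    show C (a : B) * X = (C ((t' : B)) * X) * C ((c' : B))
    rw [ha_eq', C_mul]; ring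
  obtain ⟨⟨r, -, hr⟩, -⟩ := hs.1.2 _ (Set.mem_univ _) hFne _ _ _ _ l1 l2
  have e1 : b * (t : B) = (r : Polynomial B).coeff 0 * (t' : B) := by
    have e := congrArg Subtype.val hr
    rw [smul_coe] at e
    have e2 : C (b * (t : B)) * X = (r : Polynomial B) * (C ((t' : B)) * X) := e
    have e3 := congrArg (fun p => Polynomial.coeff p 1) e2
    simp only [coeff_C_mul, coeff_X_one, mul_one] at e3
    rw [show (r : Polynomial B) * (C ((t' : B)) * X) =
      ((r : Polynomial B) * C ((t' : B))) * X by ring, coeff_mul_X_one,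
      Polynomial.mul_coeff_zero, coeff_C_zero] at e3
    exact e3
  exact ⟨⟨(r : Polynomial B).coeff 0 * (t' : B), A.mul_mem r.2 t'.2⟩, t, htS0, e1⟩


lemma bwd (h1 : Splits (S0set B A) (Set.univ : Set A))
    (h2 : ∀ b : B, ∃ u : B, IsUnit u ∧ ∃ a : A, b = u * a)
    (h3 : ∀ b : B, IsUnit b → (∃ a a' : A, (a' : B) ≠ 0 ∧ b * a' = a) →
      ∃ a s : A, IsUnit (s : B) ∧ b * s = a) :
    Splits (Sset B A) (Set.univ : Set (AXBX B A)) := by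
  refine ⟨⟨?_, ?_⟩, ?_⟩
  · -- compactly S-atomic
    intro f _ hf
    obtain ⟨k, q, hq, hq0⟩ := exists_ord (f : Polynomial B) (coe_nzR hf)
    rcases Nat.eq_zero_or_pos k with hk0 | hkpos
    · rw [hk0, pow_zero, one_mul] at hq
      have hf0 : (f : Polynomial B).coeff 0 ≠ 0 := by rw [hq]; exact hq0
      obtain ⟨t, c, ht, hcp, htc⟩ := h1.1.1 ⟨(f : Polynomial B).coeff 0, f.2⟩
        (Set.mem_univ _) (fun h => hf0 (by simpa using congrArg Subtype.val h))
      obtain ⟨Ut, hUt⟩ := ht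
      have hc_eq : (c : B) = ((Ut⁻¹ : Bˣ) : B) * (f : Polynomial B).coeff 0 := by
        have e := congrArg Subtype.val htc
        rw [smulA_coe] at e
        have e2 : (f : Polynomial B).coeff 0 = (t : B) * c := e
        rw [e2, ← hUt, ← mul_assoc, Units.inv_mul, one_mul]
      have hcne : (c : B) ≠ 0 := by
        intro h
        rw [h] at hc_eq
        exact hf0 (by
          have := hc_eq.symm
          rcases mul_eq_zero.mp this with h' | h'
          · exact absurd h' (Ut⁻¹ : Bˣ).ne_zero
          · exact h')
      have hnmem : (C ((Ut⁻¹ : Bˣ) : B) * (f : Polynomial B)).coeff 0 ∈ A := by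
        rw [Polynomial.mul_coeff_zero, coeff_C_zero, ← hc_eq]; exact c.2
      refine ⟨CR t, ⟨C ((Ut⁻¹ : Bˣ) : B) * (f : Polynomial B), hnmem⟩,
        CR_mem_S ⟨Ut, hUt⟩, ?_, ?_⟩
      · exact prim_up _ c (by rw [Polynomial.mul_coeff_zero, coeff_C_zero, ← hc_eq]) hcne hcp
      · apply coeq
        rw [smul_coe]
        show (f : Polynomial B) = C ((t : A) : B) * (C ((Ut⁻¹ : Bˣ) : B) * (f : Polynomial B))
        rw [← mul_assoc, ← C_mul, ← hUt, Units.mul_inv, C_1, one_mul]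
    · -- k ≥ 1
      obtain ⟨u, hu, a, ha⟩ := h2 (q.coeff 0)
      obtain ⟨U, hU⟩ := hu
      have hane : a ≠ 0 := by
        rintro rfl
        exact hq0 (by rw [ha]; simp)
      obtain ⟨t, c, ht, hcp, htc⟩ := h1.1.1 a (Set.mem_univ _) hane
      obtain ⟨Ut, hUt⟩ := ht
      have hq0c : q.coeff 0 = ((U * Ut : Bˣ) : B) * (c : B) := by
        have e := congrArg Subtype.val htc
        rw [smulA_coe] at e
        have e2 : (a : B) = (t : B) * c := e
        rw [ha, e2, Units.val_mul, hU, hUt, mul_assoc]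
      have hcne : (c : B) ≠ 0 := fun h => hq0 (by rw [hq0c, h, mul_zero])
      have hnmem : (C (((U * Ut)⁻¹ : Bˣ) : B) * q).coeff 0 ∈ A := by
        rw [Polynomial.mul_coeff_zero, coeff_C_zero, hq0c, ← mul_assoc, Units.inv_mul, one_mul]
        exact c.2
      have hsmem : (C ((U * Ut : Bˣ) : B) * X ^ k : Polynomial B).coeff 0 ∈ A := by
        rw [Polynomial.mul_coeff_zero, coeff_X_pow, if_neg (by omega : ¬ (0 = k)), mul_zero]
        exact A.zero_mem
      refine ⟨⟨C ((U * Ut : Bˣ) : B) * X ^ k, hsmem⟩, ⟨C (((U * Ut)⁻¹ : Bˣ) : B) * q, hnmem⟩,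
        Or.inr ⟨((U * Ut : Bˣ) : B), (U * Ut).isUnit, k, by omega, rfl⟩, ?_, ?_⟩
      · exact prim_up _ c (by rw [Polynomial.mul_coeff_zero, coeff_C_zero, hq0c, ← mul_assoc,
          Units.inv_mul, one_mul]) hcne hcp
      · apply coeq
        rw [smul_coe]
        show (f : Polynomial B) = (C ((U * Ut : Bˣ) : B) * X ^ k) *
          (C (((U * Ut)⁻¹ : Bˣ) : B) * q)
        calc (f : Polynomial B) = X ^ k * q := hq
        _ = C (((U * Ut : Bˣ) : B) * (((U * Ut)⁻¹ : Bˣ) : B)) * (X ^ k * q) := by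
            rw [Units.mul_inv, C_1, one_mul]
        _ = _ := by rw [C_mul]; ring
  · -- semi-S-factorability
    intro f _ hf s n s' n' hc1 hc2
    obtain ⟨hsS, hnp, he⟩ := hc1
    obtain ⟨hs'S, hn'p, he'⟩ := hc2
    have hnne : n ≠ 0 := by rintro rfl; rw [smul_zero] at he; exact hf he
    have hn'ne : n' ≠ 0 := by rintro rfl; rw [smul_zero] at he'; exact hf he'
    have hn0 := prim_coeff_ne h2 n hnp hnne
    have hn'0 := prim_coeff_ne h2 n' hn'p hn'ne
    obtain ⟨c, k, hc, hsf, -⟩ := S_form hsS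
    obtain ⟨c', k', hc', hs'f, -⟩ := S_form hs'S
    have heq : (C c * (n : Polynomial B)) * X ^ k = (C c' * (n' : Polynomial B)) * X ^ k' := by
      have e := (congrArg Subtype.val he).symm.trans (congrArg Subtype.val he')
      rw [smul_coe, smul_coe, hsf, hs'f] at e
      linear_combination e
    have hkk : k = k' := by
      by_contra hne2
      rcases Nat.lt_or_ge k k' with hlt | hge
      · have E1 := congrArg (fun p => Polynomial.coeff p k) heq
        simp only [coeff_mul_X_pow'] at E1
        rw [if_pos (le_refl k), if_neg (by omega), Nat.sub_self, Polynomial.mul_coeff_zero,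
          coeff_C_zero] at E1
        exact (mul_ne_zero hc.ne_zero hn0) E1
      · have E2 := congrArg (fun p => Polynomial.coeff p k') heq
        simp only [coeff_mul_X_pow'] at E2
        rw [if_neg (by omega), if_pos (le_refl k'), Nat.sub_self, Polynomial.mul_coeff_zero,
          coeff_C_zero] at E2
        exact (mul_ne_zero hc'.ne_zero hn'0) E2.symm
    subst hkk
    have e0 : c * (n : Polynomial B).coeff 0 = c' * (n' : Polynomial B).coeff 0 := by
      have E := congrArg (fun p => Polynomial.coeff p k) heq
      simp only [coeff_mul_X_pow'] at E
      rw [if_pos (le_refl k), if_pos (le_refl k), Nat.sub_self, Polynomial.mul_coeff_zero,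
        Polynomial.mul_coeff_zero, coeff_C_zero, coeff_C_zero] at E
      exact E
    have hc'ne : c' ≠ 0 := hc'.ne_zero
    obtain ⟨Uc', hUc'⟩ := id hc'
    obtain ⟨w, hwdef⟩ : ∃ w : B, w = c * ((Uc'⁻¹ : Bˣ) : B) := ⟨_, rfl⟩
    have hwu : IsUnit w := by rw [hwdef]; exact hc.mul (Uc'⁻¹ : Bˣ).isUnit
    have hc'w : c' * w = c := by
      rw [hwdef, ← hUc',
        show ((Uc' : Bˣ) : B) * (c * ((Uc'⁻¹ : Bˣ) : B)) =
          c * (((Uc' : Bˣ) : B) * ((Uc'⁻¹ : Bˣ) : B)) by ring,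
        Units.mul_inv, mul_one]
    have hwn0 : w * (n : Polynomial B).coeff 0 = (n' : Polynomial B).coeff 0 := by
      apply mul_left_cancel₀ hc'ne
      rw [← mul_assoc, hc'w]
      exact e0
    obtain ⟨aa, t, htU, hwt⟩ := h3 w hwu
      ⟨⟨(n' : Polynomial B).coeff 0, n'.2⟩, ⟨(n : Polynomial B).coeff 0, n.2⟩, hn0, hwn0⟩
    have haaU : IsUnit ((aa : A) : B) := by rw [← hwt]; exact hwu.mul htU
    have htne : ((t : A) : B) ≠ 0 := htU.ne_zero
    have hprimn0 := prim_down n hnp ⟨(n : Polynomial B).coeff 0, n.2⟩ rfl hn0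
    have hprimn0' := prim_down n' hn'p ⟨(n' : Polynomial B).coeff 0, n'.2⟩ rfl hn'0
    have hfact1 : IsCompactFactorization (S0set B A)
        (t • (⟨(n' : Polynomial B).coeff 0, n'.2⟩ : A)) t ⟨(n' : Polynomial B).coeff 0, n'.2⟩ :=
      ⟨htU, hprimn0', rfl⟩
    have hfact2 : IsCompactFactorization (S0set B A)
        (t • (⟨(n' : Polynomial B).coeff 0, n'.2⟩ : A)) aa ⟨(n : Polynomial B).coeff 0, n.2⟩ := by
      refine ⟨haaU, hprimn0, ?_⟩
      apply Subtype.ext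
      rw [smulA_coe, smulA_coe]
      show (t : B) * (n' : Polynomial B).coeff 0 = (aa : B) * (n : Polynomial B).coeff 0
      rw [← hwt, ← hwn0]; ring
    have hm0ne : (t • (⟨(n' : Polynomial B).coeff 0, n'.2⟩ : A)) ≠ 0 := by
      intro h
      have e := congrArg Subtype.val h
      rw [smulA_coe] at e
      simp only [ZeroMemClass.coe_zero] at e
      rcases mul_eq_zero.mp e with h' | h'
      exacts [htne h', hn'0 h']
    obtain ⟨⟨ρ, -, hρ⟩, ⟨ρ', -, hρ'⟩⟩ :=
      h1.1.2 _ (Set.mem_univ _) hm0ne _ _ _ _ hfact1 hfact2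
    have hwρ' : w = ((ρ' : A) : B) := by
      apply mul_right_cancel₀ htne
      rw [hwt, congrArg Subtype.val hρ', smulA_coe]
    have hρw : ((ρ : A) : B) * w = 1 := by
      apply mul_right_cancel₀ htne
      rw [one_mul, mul_assoc, hwt, ← smulA_coe, ← hρ]
    have hcc' : c = w * c' := by
      rw [hwdef, mul_assoc, ← hUc', Units.inv_mul, mul_one]
    refine ⟨⟨⟨C ((ρ' : A) : B), by rw [mem_AXBX, coeff_C_zero]; exact ρ'.2⟩,
        Set.mem_univ _, ?_⟩,
      ⟨⟨C ((ρ : A) : B), by rw [mem_AXBX, coeff_C_zero]; exact ρ.2⟩, Set.mem_univ _, ?_⟩⟩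
    · apply coeq
      rw [smul_coe]
      show (s : Polynomial B) = C ((ρ' : A) : B) * (s' : Polynomial B)
      rw [hsf, hs'f, hcc', hwρ', C_mul, mul_assoc]
    · apply coeq
      rw [smul_coe]
      show (s' : Polynomial B) = C ((ρ : A) : B) * (s : Polynomial B)
      rw [hsf, hcc', C_mul,
        show C ((ρ : A) : B) * (C w * C c' * X ^ k) =
          (C ((ρ : A) : B) * C w) * (C c' * X ^ k) by ring,
        ← C_mul, hρw, C_1, one_mul, hs'f]
  · -- splitting clause
    intro r hrp m hmp hne _
    have hrne : r ≠ 0 := by rintro rfl; exact hne (zero_smul _ _)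
    have hmne : m ≠ 0 := by rintro rfl; exact hne (smul_zero _)
    have hr0 := prim_coeff_ne h2 r hrp hrne
    have hm0 := prim_coeff_ne h2 m hmp hmne
    have hrd := prim_down r hrp ⟨(r : Polynomial B).coeff 0, r.2⟩ rfl hr0
    have hmd := prim_down m hmp ⟨(m : Polynomial B).coeff 0, m.2⟩ rfl hm0
    have hprodA := h1.2 _ hrd _ hmd (by
      intro h
      have e := congrArg Subtype.val h
      rw [smulA_coe] at e
      simp only [ZeroMemClass.coe_zero] at e
      rcases mul_eq_zero.mp e with h' | h'
      exacts [hr0 h', hm0 h']) (Set.mem_univ _)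
    apply prim_up (r • m)
      ((⟨(r : Polynomial B).coeff 0, r.2⟩ : A) • (⟨(m : Polynomial B).coeff 0, m.2⟩ : A))
      ?_ ?_ hprodA
    · rw [smul_coe, Polynomial.mul_coeff_zero, smulA_coe]
    · rw [smulA_coe]; exact mul_ne_zero hr0 hm0

lemma field_splits0 (hB : IsField B) : Splits (S0set B A) (Set.univ : Set A) := by
  have unitB : ∀ x : B, x ≠ 0 → IsUnit x := by
    intro x hx
    obtain ⟨y, hy⟩ := hB.mul_inv_cancel hx
    exact IsUnit.of_mul_eq_one (a := x) y hy
  have lemA : ∀ v : A, IsUnit v → SPrimitive (S0set B A) v := by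
    intro v hv s hsS0 n hn
    obtain ⟨U, hU⟩ := hv
    have hvB : (v : B) = (s : B) * (n : B) := by rw [congrArg Subtype.val hn, smulA_coe]
    have hvU : IsUnit (v : B) := by rw [← hU]; exact U.isUnit.map A.subtype
    have hnB : IsUnit ((n : A) : B) := by
      apply unitB
      intro h
      rw [h, mul_zero] at hvB
      exact hvU.ne_zero hvB
    refine ⟨⟨n * (↑U⁻¹ : A), ?_, ?_⟩, ⟨s, hsS0, hn⟩⟩
    · show IsUnit ((n * (↑U⁻¹ : A) : A) : B)
      push_cast
      exact hnB.mul ((U⁻¹).isUnit.map A.subtype)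
    · rw [smul_eq_mul, mul_assoc, show ((↑U⁻¹ : A)) * v = 1 by rw [← hU]; exact U.inv_mul,
        mul_one]
  have lemB : ∀ n : A, SPrimitive (S0set B A) n → n ≠ 0 → IsUnit n := by
    intro n hp hne
    have hU : IsUnit ((n : A) : B) := unitB _ (coe_nzA hne)
    obtain ⟨⟨σ, hσ, hσ1⟩, -⟩ := hp n hU 1 (by rw [smul_eq_mul, mul_one])
    refine IsUnit.of_mul_eq_one (a := n) σ ?_
    rw [smul_eq_mul] at hσ1
    rw [mul_comm]
    exact hσ1.symm
  refine ⟨⟨?_, ?_⟩, ?_⟩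
  · intro a _ ha
    exact ⟨a, 1, unitB _ (coe_nzA ha), lemA 1 isUnit_one, by rw [smul_eq_mul, mul_one]⟩
  · rintro m _ hm s n s' n' ⟨hsS, hnp, he⟩ ⟨hs'S, hn'p, he'⟩
    have hnne : n ≠ 0 := by rintro rfl; rw [smul_zero] at he; exact hm he
    have hn'ne : n' ≠ 0 := by rintro rfl; rw [smul_zero] at he'; exact hm he'
    obtain ⟨Un, hUn⟩ := lemB n hnp hnne
    obtain ⟨Un', hUn'⟩ := lemB n' hn'p hn'ne
    have hmm : s * n = s' * n' := by rw [← smul_eq_mul, ← smul_eq_mul, ← he, ← he']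
    refine ⟨⟨n' * (↑Un⁻¹ : A), Set.mem_univ _, ?_⟩, ⟨n * (↑Un'⁻¹ : A), Set.mem_univ _, ?_⟩⟩
    · rw [smul_eq_mul]
      calc s = s * ((↑Un : A) * (↑Un⁻¹ : A)) := by rw [Un.mul_inv, mul_one]
      _ = (s * n) * (↑Un⁻¹ : A) := by rw [hUn]; ring
      _ = (s' * n') * (↑Un⁻¹ : A) := by rw [hmm]
      _ = n' * (↑Un⁻¹ : A) * s' := by ring
    · rw [smul_eq_mul]
      calc s' = s' * ((↑Un' : A) * (↑Un'⁻¹ : A)) := by rw [Un'.mul_inv, mul_one]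
      _ = (s' * n') * (↑Un'⁻¹ : A) := by rw [hUn']; ring
      _ = (s * n) * (↑Un'⁻¹ : A) := by rw [← hmm]
      _ = n * (↑Un'⁻¹ : A) * s := by ring
  · intro r hrp m hmp hne _
    have hrne : r ≠ 0 := by rintro rfl; exact hne (zero_smul _ _)
    have hmne : m ≠ 0 := by rintro rfl; exact hne (smul_zero _)
    have hu := (lemB r hrp hrne).mul (lemB m hmp hmne)
    rw [← smul_eq_mul] at hu
    exact lemA _ hu

end Proof16

theorem statement16 (B : Type*) [CommRing B] [IsDomain B] (A : Subring B) :
    (Splits (Sset B A) (Set.univ : Set (AXBX B A)) ↔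
      (Splits (S0set B A) (Set.univ : Set A) ∧
       (∀ b : B, ∃ u : B, IsUnit u ∧ ∃ a : A, b = u * a) ∧
       (∀ b : B, IsUnit b → (∃ a a' : A, (a' : B) ≠ 0 ∧ b * a' = a) →
          ∃ a s : A, IsUnit (s : B) ∧ b * s = a))) ∧
    (IsField B → Splits (Sset B A) (Set.univ : Set (AXBX B A))) ∧
    ((Splits (S0set B A) (Set.univ : Set A) ∧
        ∀ b : B, ∃ a s : A, IsUnit (s : B) ∧ b * s = a) →
      Splits (Sset B A) (Set.univ : Set (AXBX B A))) := by
  refine ⟨⟨fun hs => ⟨fwd1 hs, fwd2 hs, fwd3 hs⟩, fun h => bwd h.1 h.2.1 h.2.2⟩, ?_, ?_⟩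
  · intro hB
    apply bwd (field_splits0 hB)
    · intro b
      by_cases hb : b = 0
      · exact ⟨1, isUnit_one, 0, by simp [hb]⟩
      · obtain ⟨y, hy⟩ := hB.mul_inv_cancel hb
        exact ⟨b, IsUnit.of_mul_eq_one (a := b) y hy, 1, by simp⟩
    · rintro b hb ⟨a, a', ha', hba⟩
      refine ⟨a, a', ?_, hba⟩
      obtain ⟨y, hy⟩ := hB.mul_inv_cancel ha'
      exact IsUnit.of_mul_eq_one y hy
  · rintro ⟨h1, h23⟩
    apply bwd h1
    · intro b
      obtain ⟨a, s, hsU, hbs⟩ := h23 b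
      obtain ⟨U, hU⟩ := hsU
      refine ⟨((U⁻¹ : Bˣ) : B), (U⁻¹).isUnit, a, ?_⟩
      rw [← hbs, ← hU,
        show ((U⁻¹ : Bˣ) : B) * (b * ((U : Bˣ) : B)) = b * (((U : Bˣ) : B) * ((U⁻¹ : Bˣ) : B))
          by ring,
        Units.mul_inv, mul_one]
    · rintro b - -
      obtain ⟨a, s, hsU, hbs⟩ := h23 b
      exact ⟨a, s, hsU, hbs⟩

end FactorizationPaper
end

section
/- Let B be an integral domain. Then the polynomial ring B[X] is atomic (respectively, a BFD, an FFD, an HFD, a UFD) if and only if the Laurent polynomial ring B[X, X^{-1}] is atomic (respectively, a BFD, an FFD, an HFD, a UFD). -/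
namespace FactorizationPaper

variable {R : Type*} [CommRing R]

section ListLemmas

variable {α β : Type*}

theorem forall₂_perm_right {Rel : α → β → Prop} {l : List α} {p q : List β}
    (h : List.Forall₂ Rel l p) (hpq : p.Perm q) :
    ∃ l', l.Perm l' ∧ List.Forall₂ Rel l' q := by
  induction hpq generalizing l with
  | nil =>
    cases h
    exact ⟨[], List.Perm.refl _, List.Forall₂.nil⟩
  | cons x hpq ih =>
    cases h with
    | cons hax h0 =>
      obtain ⟨l', hperm, hf⟩ := ih h0
      exact ⟨_ :: l', hperm.cons _, List.Forall₂.cons hax hf⟩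
  | swap x y p =>
    cases h with
    | cons hay h0 =>
      cases h0 with
      | cons hbx h1 =>
        exact ⟨_ :: _ :: _, List.Perm.swap _ _ _, List.Forall₂.cons hbx
          (List.Forall₂.cons hay h1)⟩
  | trans h1 h2 ih1 ih2 =>
    obtain ⟨l1, hp1, hf1⟩ := ih1 h
    obtain ⟨l2, hp2, hf2⟩ := ih2 hf1
    exact ⟨l2, hp1.trans hp2, hf2⟩

theorem forall₂_perm_left {Rel : α → β → Prop} {l l₂ : List α} {p : List β}
    (h : List.Forall₂ Rel l p) (hll : l.Perm l₂) :
    ∃ p₂, p.Perm p₂ ∧ List.Forall₂ Rel l₂ p₂ := by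
  have h' : List.Forall₂ (fun b a => Rel a b) p l := h.flip
  obtain ⟨p₂, hp, hf⟩ := forall₂_perm_right h' hll
  exact ⟨p₂, hp, hf.flip⟩

theorem forall₂_assoc_trans {D : Type*} [CommMonoid D] :
    ∀ {l p q : List D}, List.Forall₂ (fun a b : D => Associated a b) l p →
      List.Forall₂ (fun a b : D => Associated a b) p q → List.Forall₂ (fun a b : D => Associated a b) l q := by
  intro l p q h1 h2
  induction h1 generalizing q with
  | nil => cases h2; exact List.Forall₂.nil
  | cons hab h0 ih =>
    cases h2 with
    | cons hbc h2' => exact List.Forall₂.cons (hab.trans hbc) (ih h2')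

variable {D : Type*} [CommRing D]

theorem la_refl (l : List D) : ListAssociated D l l :=
  ⟨l, List.Perm.refl _, List.forall₂_same.2 fun x _ => Associated.refl x⟩

theorem la_of_perm {l l' : List D} (h : l.Perm l') : ListAssociated D l l' :=
  ⟨l, h.symm, List.forall₂_same.2 fun x _ => Associated.refl x⟩

theorem la_symm {l l' : List D} (h : ListAssociated D l l') : ListAssociated D l' l := by
  obtain ⟨p, hperm, hf⟩ := h
  have hf' : List.Forall₂ (fun a b : D => Associated a b) p l :=
    hf.flip.imp fun _ _ hab => Associated.symm hab
  obtain ⟨r, hr, hfr⟩ := forall₂_perm_left hf' hperm.symm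
  exact ⟨r, hr, hfr⟩

theorem la_trans {l l' l'' : List D} (h1 : ListAssociated D l l')
    (h2 : ListAssociated D l' l'') : ListAssociated D l l'' := by
  obtain ⟨p, hp, hfp⟩ := h1
  obtain ⟨q, hq, hfq⟩ := h2
  obtain ⟨q₂, hq₂, hfq₂⟩ := forall₂_perm_left hfq hp
  exact ⟨q₂, hq.trans hq₂, forall₂_assoc_trans hfp hfq₂⟩

theorem forall₂_append' {α β : Type*} {R : α → β → Prop} :
    ∀ {l₁ l₂ : List α} {m₁ m₂ : List β},
      List.Forall₂ R l₁ m₁ → List.Forall₂ R l₂ m₂ → List.Forall₂ R (l₁ ++ l₂) (m₁ ++ m₂) := by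
  intro l₁ l₂ m₁ m₂ h1 h2
  induction h1 with
  | nil => simpa using h2
  | cons hab h ih => exact List.Forall₂.cons hab ih

theorem la_append {l₁ l₁' l₂ l₂' : List D} (h1 : ListAssociated D l₁ l₁')
    (h2 : ListAssociated D l₂ l₂') : ListAssociated D (l₁ ++ l₂) (l₁' ++ l₂') := by
  obtain ⟨p, hp, hfp⟩ := h1
  obtain ⟨q, hq, hfq⟩ := h2
  exact ⟨p ++ q, hp.append hq, forall₂_append' hfp hfq⟩

theorem la_length {l l' : List D} (h : ListAssociated D l l') : l.length = l'.length := by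
  obtain ⟨p, hp, hfp⟩ := h
  rw [hfp.length_eq, hp.length_eq]


theorem perm_map_surj {α β : Type*} (f : α → β) {l : List α} {w : List β}
    (h : (l.map f).Perm w) : ∃ l₂ : List α, l.Perm l₂ ∧ w = l₂.map f := by
  suffices H : ∀ {m w : List β}, m.Perm w → ∀ l : List α, m = l.map f →
      ∃ l₂ : List α, l.Perm l₂ ∧ w = l₂.map f from H h l rfl
  intro m w h
  induction h with
  | nil =>
    intro l hl
    cases l with
    | nil => exact ⟨[], List.Perm.refl _, rfl⟩
    | cons a l => simp at hl
  | cons x h ih =>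
    intro l hl
    cases l with
    | nil => simp at hl
    | cons a l₀ =>
      rw [List.map_cons, List.cons.injEq] at hl
      obtain ⟨rfl, hl⟩ := hl
      obtain ⟨l₂, hp, rfl⟩ := ih l₀ hl
      exact ⟨a :: l₂, hp.cons a, rfl⟩
  | swap x y m =>
    intro l hl
    cases l with
    | nil => simp at hl
    | cons a l₀ =>
      cases l₀ with
      | nil => simp at hl
      | cons b l₁ =>
        rw [List.map_cons, List.map_cons, List.cons.injEq] at hl
        obtain ⟨rfl, hl⟩ := hl
        rw [List.cons.injEq] at hl
        obtain ⟨rfl, rfl⟩ := hl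
        exact ⟨b :: a :: l₁, List.Perm.swap b a l₁, rfl⟩
  | trans h1 h2 ih1 ih2 =>
    intro l hl
    obtain ⟨l₂, hp1, rfl⟩ := ih1 l hl
    obtain ⟨l₃, hp2, rfl⟩ := ih2 l₂ rfl
    exact ⟨l₃, hp1.trans hp2, rfl⟩

theorem forall₂_imp_mem {α β : Type*} {R S : α → β → Prop} :
    ∀ {l : List α} {l' : List β}, List.Forall₂ R l l' →
      (∀ a ∈ l, ∀ b ∈ l', R a b → S a b) → List.Forall₂ S l l' := by
  intro l l' h
  induction h with
  | nil => exact fun _ => List.Forall₂.nil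
  | @cons a b l l' hab h ih =>
    intro hmem
    exact List.Forall₂.cons
      (hmem a (List.mem_cons_self) b (List.mem_cons_self) hab)
      (ih fun x hx y hy => hmem x (List.mem_cons_of_mem a hx) y (List.mem_cons_of_mem b hy))

end ListLemmas

section Laurent

open Polynomial

variable {B : Type*} [CommRing B] [IsDomain B]

local notation "LL" => Localization (Submonoid.powers (Polynomial.X : Polynomial B))
local notation "φB" => algebraMap (Polynomial B)
    (Localization (Submonoid.powers (Polynomial.X : Polynomial B)))

theorem powersXle :
    Submonoid.powers (Polynomial.X : Polynomial B) ≤ nonZeroDivisors (Polynomial B) :=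
  powers_le_nonZeroDivisors_of_noZeroDivisors Polynomial.X_ne_zero

instance : IsDomain (Localization (Submonoid.powers (Polynomial.X : Polynomial B))) :=
  IsLocalization.isDomain_localization powersXle

theorem lm_inj : Function.Injective (φB) :=
  IsLocalization.injective _ powersXle

theorem lm_unit_X_pow (n : ℕ) : IsUnit (φB (Polynomial.X ^ n)) :=
  IsLocalization.map_units LL
    (⟨Polynomial.X ^ n, n, rfl⟩ : Submonoid.powers (Polynomial.X : Polynomial B))

theorem not_X_dvd_ne_zero {g : Polynomial B} (hg : ¬ Polynomial.X ∣ g) : g ≠ 0 := by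
  rintro rfl; exact hg (dvd_zero _)

theorem not_X_dvd_unit_mul {u g : Polynomial B} (hu : IsUnit u) (hg : ¬ Polynomial.X ∣ g) :
    ¬ Polynomial.X ∣ u * g := by
  intro h
  rcases (Polynomial.prime_X (R := B)).2.2 _ _ h with h' | h'
  · exact Polynomial.not_isUnit_X (isUnit_of_dvd_unit h' hu)
  · exact hg h'

theorem pow_mul_eq_pow_mul {p q : Polynomial B} :
    ∀ {a b : ℕ}, ¬ Polynomial.X ∣ p → ¬ Polynomial.X ∣ q →
      Polynomial.X ^ a * p = Polynomial.X ^ b * q → a = b ∧ p = q := by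
  intro a
  induction a with
  | zero =>
    intro b hp hq h
    cases b with
    | zero => simpa using h
    | succ b =>
      exfalso
      apply hp
      rw [pow_zero, one_mul] at h
      exact ⟨Polynomial.X ^ b * q, by rw [h, pow_succ]; ring⟩
  | succ a ih =>
    intro b hp hq h
    cases b with
    | zero =>
      exfalso
      apply hq
      rw [pow_zero, one_mul] at h
      exact ⟨Polynomial.X ^ a * p, by rw [← h, pow_succ]; ring⟩
    | succ b =>
      have h' : Polynomial.X ^ a * p = Polynomial.X ^ b * q := by
        apply mul_left_cancel₀ (Polynomial.X_ne_zero (R := B))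
        calc Polynomial.X * (Polynomial.X ^ a * p) = Polynomial.X ^ (a + 1) * p := by
              rw [pow_succ]; ring
          _ = Polynomial.X ^ (b + 1) * q := h
          _ = Polynomial.X * (Polynomial.X ^ b * q) := by rw [pow_succ]; ring
      obtain ⟨h1, h2⟩ := ih hp hq h'
      exact ⟨by omega, h2⟩

theorem exists_X_decomp : ∀ (n : ℕ) (f : Polynomial B), f.natDegree ≤ n → f ≠ 0 →
    ∃ (m : ℕ) (g : Polynomial B), ¬ Polynomial.X ∣ g ∧ f = Polynomial.X ^ m * g := by
  intro n
  induction n with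
  | zero =>
    intro f hdeg hf
    refine ⟨0, f, ?_, by rw [pow_zero, one_mul]⟩
    rintro ⟨g, rfl⟩
    have hg : g ≠ 0 := by rintro rfl; simp at hf
    have := Polynomial.natDegree_mul (Polynomial.X_ne_zero (R := B)) hg
    rw [Polynomial.natDegree_X] at this
    omega
  | succ n ih =>
    intro f hdeg hf
    by_cases hdvd : Polynomial.X ∣ f
    · obtain ⟨g, rfl⟩ := hdvd
      have hg : g ≠ 0 := by rintro rfl; simp at hf
      have hdg : g.natDegree ≤ n := by
        have := Polynomial.natDegree_mul (Polynomial.X_ne_zero (R := B)) hg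
        rw [Polynomial.natDegree_X] at this
        omega
      obtain ⟨m, g₀, hg₀, hgeq⟩ := ih g hdg hg
      exact ⟨m + 1, g₀, hg₀, by rw [hgeq, pow_succ]; ring⟩
    · exact ⟨0, f, hdvd, by rw [pow_zero, one_mul]⟩

theorem exists_X_decomp' (f : Polynomial B) (hf : f ≠ 0) :
    ∃ (m : ℕ) (g : Polynomial B), ¬ Polynomial.X ∣ g ∧ f = Polynomial.X ^ m * g :=
  exists_X_decomp f.natDegree f le_rfl hf

theorem isUnit_lm_iff {g : Polynomial B} (hg : ¬ Polynomial.X ∣ g) :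
    IsUnit (φB g) ↔ IsUnit g := by
  constructor
  · intro h
    obtain ⟨y, hy⟩ := h.exists_right_inv
    obtain ⟨⟨h₀, t⟩, ht⟩ := IsLocalization.mk'_surjective
      (Submonoid.powers (Polynomial.X : Polynomial B)) y
    obtain ⟨n, hn⟩ := t.2
    have hn' : (Polynomial.X : Polynomial B) ^ n = ↑t := hn
    have h1 : y * φB t.1 = φB h₀ := by
      rw [← ht]; exact IsLocalization.mk'_spec _ h₀ t
    have key : g * h₀ = Polynomial.X ^ n := by
      apply lm_inj
      rw [map_mul, ← h1, ← mul_assoc, hy, one_mul, ← hn']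
    obtain ⟨i, _, hassoc⟩ := (dvd_prime_pow Polynomial.prime_X n).1 ⟨h₀, key.symm⟩
    cases i with
    | zero =>
      rw [pow_zero] at hassoc
      exact associated_one_iff_isUnit.1 hassoc
    | succ i =>
      exfalso
      apply hg
      obtain ⟨u, hu⟩ := hassoc.symm
      exact ⟨Polynomial.X ^ i * (u : Polynomial B), by rw [← hu, pow_succ]; ring⟩
  · exact fun h => h.map (φB)

theorem normal_form (y : LL) (hy : y ≠ 0) :
    ∃ (g : Polynomial B) (t : LL), IsUnit t ∧ ¬ Polynomial.X ∣ g ∧ y = t * φB g := by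
  obtain ⟨⟨f, s⟩, hs⟩ := IsLocalization.mk'_surjective
    (Submonoid.powers (Polynomial.X : Polynomial B)) y
  have hspec : y * φB s.1 = φB f := by rw [← hs]; exact IsLocalization.mk'_spec _ f s
  have hsu : IsUnit (φB s.1) := IsLocalization.map_units LL s
  have hf : f ≠ 0 := by
    rintro rfl
    rw [map_zero] at hspec
    rcases mul_eq_zero.1 hspec with h | h
    · exact hy h
    · exact hsu.ne_zero h
  obtain ⟨m, g, hgX, rfl⟩ := exists_X_decomp' f hf
  refine ⟨g, φB (Polynomial.X ^ m) * ↑hsu.unit⁻¹, ((lm_unit_X_pow m).mul hsu.unit⁻¹.isUnit), hgX, ?_⟩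
  have : y * φB s.1 * ↑hsu.unit⁻¹ = φB (Polynomial.X ^ m) * φB g * ↑hsu.unit⁻¹ := by
    rw [hspec, map_mul]
  have hcan : φB s.1 * ↑hsu.unit⁻¹ = 1 := hsu.mul_val_inv
  calc y = y * (φB s.1 * ↑hsu.unit⁻¹) := by rw [hcan, mul_one]
    _ = (y * φB s.1) * ↑hsu.unit⁻¹ := by ring
    _ = φB (Polynomial.X ^ m * g) * ↑hsu.unit⁻¹ := by rw [hspec]
    _ = (φB (Polynomial.X ^ m) * ↑hsu.unit⁻¹) * φB g := by rw [map_mul]; ring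

theorem assoc_of_unit_mul {g h : Polynomial B} (hg : ¬ Polynomial.X ∣ g)
    (hh : ¬ Polynomial.X ∣ h) {t : LL} (ht : IsUnit t) (heq : φB h = t * φB g) :
    Associated g h := by
  obtain ⟨⟨c, s⟩, hcs⟩ := IsLocalization.mk'_surjective
    (Submonoid.powers (Polynomial.X : Polynomial B)) t
  obtain ⟨m, hm⟩ := s.2
  have hm' : (Polynomial.X : Polynomial B) ^ m = ↑s := hm
  have hspec : t * φB s.1 = φB c := by rw [← hcs]; exact IsLocalization.mk'_spec _ c s
  -- t is a unit, so c divides a power of X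
  obtain ⟨t', htt'⟩ := ht.exists_right_inv
  obtain ⟨⟨d, s'⟩, hds⟩ := IsLocalization.mk'_surjective
    (Submonoid.powers (Polynomial.X : Polynomial B)) t'
  obtain ⟨k, hk⟩ := s'.2
  have hk' : (Polynomial.X : Polynomial B) ^ k = ↑s' := hk
  have hspec' : t' * φB s'.1 = φB d := by rw [← hds]; exact IsLocalization.mk'_spec _ d s'
  have hcd : c * d = Polynomial.X ^ (m + k) := by
    apply lm_inj
    calc φB (c * d) = (t * φB s.1) * (t' * φB s'.1) := by rw [map_mul, hspec, hspec']
      _ = (t * t') * (φB s.1 * φB s'.1) := by ring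
      _ = φB (Polynomial.X ^ (m + k)) := by
          rw [htt', one_mul, ← map_mul, ← hm', ← hk', pow_add]
  obtain ⟨i, _, hassoc⟩ := (dvd_prime_pow Polynomial.prime_X (m + k)).1 ⟨d, hcd.symm⟩
  obtain ⟨u, hu⟩ := hassoc.symm
  -- h * X^m = c * g
  have hmain : Polynomial.X ^ m * h = Polynomial.X ^ i * ((u : Polynomial B) * g) := by
    apply lm_inj
    calc φB (Polynomial.X ^ m * h) = φB h * φB (Polynomial.X ^ m) := by rw [map_mul]; ring
      _ = t * φB g * φB s.1 := by rw [heq, hm']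
      _ = (t * φB s.1) * φB g := by ring
      _ = φB (c * g) := by rw [hspec, map_mul]
      _ = φB (Polynomial.X ^ i * ((u : Polynomial B) * g)) := by
          rw [← hu]; ring_nf
  have hug : ¬ Polynomial.X ∣ (u : Polynomial B) * g := not_X_dvd_unit_mul u.isUnit hg
  obtain ⟨-, h2⟩ := pow_mul_eq_pow_mul hh hug hmain
  exact ⟨u, by rw [h2]; ring⟩

theorem assoc_lm_iff {g h : Polynomial B} (hg : ¬ Polynomial.X ∣ g)
    (hh : ¬ Polynomial.X ∣ h) (hass : Associated (φB g) (φB h)) : Associated g h := by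
  obtain ⟨u, hu⟩ := hass
  exact assoc_of_unit_mul hg hh u.isUnit (by rw [← hu]; ring)

theorem irred_lm_iff {g : Polynomial B} (hg : ¬ Polynomial.X ∣ g) :
    Irreducible (φB g) ↔ Irreducible g := by
  constructor
  · intro h
    constructor
    · intro hu; exact h.not_isUnit (hu.map (φB))
    · intro b c hbc
      have hXb : ¬ Polynomial.X ∣ b := fun hd => hg (by rw [hbc]; exact hd.mul_right c)
      have hXc : ¬ Polynomial.X ∣ c := fun hd => hg (by rw [hbc]; exact hd.mul_left b)
      rcases h.isUnit_or_isUnit (by rw [hbc, map_mul]) with h' | h'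
      · exact Or.inl ((isUnit_lm_iff hXb).1 h')
      · exact Or.inr ((isUnit_lm_iff hXc).1 h')
  · intro h
    constructor
    · intro hu; exact h.not_isUnit ((isUnit_lm_iff hg).1 hu)
    · intro y z hyz
      have hphig : φB g ≠ 0 := fun h0 => not_X_dvd_ne_zero hg (lm_inj (by rw [h0, map_zero]))
      have hy : y ≠ 0 := fun h0 => hphig (by rw [hyz, h0, zero_mul])
      have hz : z ≠ 0 := fun h0 => hphig (by rw [hyz, h0, mul_zero])
      obtain ⟨a, ta, hta, haX, rfl⟩ := normal_form y hy
      obtain ⟨b, tb, htb, hbX, rfl⟩ := normal_form z hz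
      have heq : φB g = (ta * tb) * φB (a * b) := by
        rw [hyz, map_mul]; ring
      have hab : ¬ Polynomial.X ∣ a * b := by
        intro hd
        rcases (Polynomial.prime_X (R := B)).2.2 _ _ hd with h' | h'
        · exact haX h'
        · exact hbX h'
      have hassoc : Associated (a * b) g := assoc_of_unit_mul hab hg (hta.mul htb) heq
      obtain ⟨v, hv⟩ := hassoc
      rcases h.isUnit_or_isUnit (show g = a * (b * (v : Polynomial B)) by rw [← hv]; ring)
        with h' | h'
      · exact Or.inl (hta.mul (h'.map (φB)))
      · exact Or.inr (htb.mul ((isUnit_of_mul_isUnit_left h').map (φB)))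

theorem not_X_dvd_prod {l : List (Polynomial B)} (h : ∀ a ∈ l, ¬ Polynomial.X ∣ a) :
    ¬ Polynomial.X ∣ l.prod := by
  intro hd
  obtain ⟨a, ha, hda⟩ := (Polynomial.prime_X (R := B)).dvd_prod_iff.1 hd
  exact h a ha hda

/-- W1 : lift an irreducible factorization from `B[X]` to the Laurent ring,
absorbing a unit into the head. -/
theorem lift_fact (t : LL) (ht : IsUnit t) (l : List (Polynomial B)) (hl : l ≠ [])
    (h : ∀ a ∈ l, Irreducible a ∧ ¬ Polynomial.X ∣ a) :
    ∃ l' : List LL, (∀ z ∈ l', Irreducible z) ∧ l'.prod = t * φB l.prod ∧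
      List.Forall₂ (fun a z => Associated (φB a) z) l l' := by
  obtain ⟨a, l₀, rfl⟩ := List.exists_cons_of_ne_nil hl
  refine ⟨(t * φB a) :: l₀.map (φB), ?_, ?_, ?_⟩
  · intro z hz
    rcases List.mem_cons.1 hz with rfl | hz
    · exact (associated_unit_mul_left _ _ ht).symm.irreducible
        ((irred_lm_iff (h a (List.mem_cons_self)).2).2 (h a (List.mem_cons_self)).1)
    · obtain ⟨b, hb, rfl⟩ := List.mem_map.1 hz
      exact (irred_lm_iff (h b (List.mem_cons_of_mem a hb)).2).2
        (h b (List.mem_cons_of_mem a hb)).1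
  · rw [List.prod_cons, List.prod_cons, map_mul, ← List.prod_hom l₀ (φB)]
    ring
  · exact List.Forall₂.cons (associated_unit_mul_left _ _ ht).symm
      (List.forall₂_map_right_iff.2 (List.forall₂_same.2 fun b _ => Associated.refl _))

/-- H2 : pull back a list of irreducible Laurent elements, entrywise. -/
theorem pull_entries : ∀ l' : List LL, (∀ z ∈ l', Irreducible z) →
    ∃ la : List (Polynomial B), (∀ a ∈ la, Irreducible a ∧ ¬ Polynomial.X ∣ a) ∧
      (∃ T : LL, IsUnit T ∧ l'.prod = T * φB la.prod) ∧
      List.Forall₂ (fun a z => Associated (φB a) z) la l' := by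
  intro l'
  induction l' with
  | nil =>
    intro _
    exact ⟨[], by simp, ⟨1, isUnit_one, by simp⟩, List.Forall₂.nil⟩
  | cons z l' ih =>
    intro h
    obtain ⟨la, hla, ⟨T, hT, hprod⟩, hf⟩ := ih fun w hw => h w (List.mem_cons_of_mem z hw)
    have hz : z ≠ 0 := (h z (List.mem_cons_self)).ne_zero
    obtain ⟨a, ta, hta, haX, hza⟩ := normal_form z hz
    have hairr : Irreducible a := by
      rw [← irred_lm_iff haX]
      exact (associated_unit_mul_left _ _ hta).irreducible
        (hza ▸ h z (List.mem_cons_self))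
    refine ⟨a :: la, ?_, ⟨ta * T, hta.mul hT, ?_⟩, ?_⟩
    · intro b hb
      rcases List.mem_cons.1 hb with rfl | hb
      · exact ⟨hairr, haX⟩
      · exact hla b hb
    · rw [List.prod_cons, List.prod_cons, map_mul, hprod, hza]; ring
    · exact List.Forall₂.cons (hza ▸ (associated_unit_mul_left _ _ hta).symm) hf

/-- W2' : pull back an irreducible factorization of `y = t * φ g` to one of `g`. -/
theorem pull_fact {y : LL} {g : Polynomial B} {t : LL} (ht : IsUnit t)
    (hgX : ¬ Polynomial.X ∣ g) (hgu : ¬ IsUnit g) (hyg : y = t * φB g)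
    (l' : List LL) (hl' : ∀ z ∈ l', Irreducible z) (hprod : y = l'.prod) :
    ∃ l : List (Polynomial B), (∀ a ∈ l, Irreducible a ∧ ¬ Polynomial.X ∣ a) ∧
      g = l.prod ∧ List.Forall₂ (fun a z => Associated (φB a) z) l l' := by
  obtain ⟨la, hla, ⟨T, hT, hTprod⟩, hf⟩ := pull_entries l' hl'
  have heq : φB la.prod = (↑hT.unit⁻¹ * t) * φB g := by
    have h1 : t * φB g = T * φB la.prod := by rw [← hyg, hprod, hTprod]
    calc φB la.prod = (↑hT.unit⁻¹ * T) * φB la.prod := by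
          rw [hT.val_inv_mul, one_mul]
      _ = ↑hT.unit⁻¹ * (T * φB la.prod) := by ring
      _ = ↑hT.unit⁻¹ * (t * φB g) := by rw [← h1]
      _ = (↑hT.unit⁻¹ * t) * φB g := by ring
  have hlaX : ¬ Polynomial.X ∣ la.prod := not_X_dvd_prod fun a ha => (hla a ha).2
  have hassoc : Associated la.prod g :=
    (assoc_of_unit_mul hgX hlaX (hT.unit⁻¹.isUnit.mul ht) heq).symm
  obtain ⟨u, hu⟩ := hassoc
  match la, hla, hf with
  | [], _, _ =>
    exfalso
    apply hgu
    rw [List.prod_nil, one_mul] at hu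
    exact hu ▸ u.isUnit
  | a :: rest, hla, List.Forall₂.cons hav hf =>
    refine ⟨(a * (u : Polynomial B)) :: rest, ?_, ?_, ?_⟩
    · intro b hb
      rcases List.mem_cons.1 hb with rfl | hb
      · have haX := (hla a (List.mem_cons_self)).2
        refine ⟨(show Associated a (a * (u : Polynomial B)) from ⟨u, rfl⟩).irreducible
          (hla a (List.mem_cons_self)).1, ?_⟩
        rw [mul_comm]
        exact not_X_dvd_unit_mul u.isUnit haX
      · exact hla b (List.mem_cons_of_mem a hb)
    · rw [← hu, List.prod_cons, List.prod_cons]; ring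
    · refine List.Forall₂.cons ?_ hf
      have h2 : Associated (φB (a * (u : Polynomial B))) (φB a) :=
        Associated.symm ⟨Units.map (φB).toMonoidHom u, by rw [map_mul]; rfl⟩
      exact h2.trans hav

/-- split an irreducible factorization into the factors associated to `X`
and those not divisible by `X`. -/
theorem split_fact : ∀ l : List (Polynomial B), (∀ a ∈ l, Irreducible a) →
    ∃ lX lnx : List (Polynomial B), l.Perm (lX ++ lnx) ∧
      (∀ a ∈ lX, Associated (Polynomial.X : Polynomial B) a) ∧
      (∀ a ∈ lnx, Irreducible a ∧ ¬ Polynomial.X ∣ a) := by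
  intro l
  induction l with
  | nil => exact fun _ => ⟨[], [], List.Perm.refl _, by simp, by simp⟩
  | cons a l ih =>
    intro h
    obtain ⟨lX, lnx, hperm, hlX, hlnx⟩ := ih fun b hb => h b (List.mem_cons_of_mem a hb)
    by_cases hd : Polynomial.X ∣ a
    · obtain ⟨v, rfl⟩ := hd
      have hv : IsUnit v := by
        rcases (h _ (List.mem_cons_self)).isUnit_or_isUnit rfl with h' | h'
        · exact absurd h' Polynomial.not_isUnit_X
        · exact h'
      refine ⟨Polynomial.X * v :: lX, lnx, hperm.cons _, ?_, hlnx⟩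
      intro b hb
      rcases List.mem_cons.1 hb with rfl | hb
      · exact ⟨hv.unit, by rw [hv.unit_spec]⟩
      · exact hlX b hb
    · refine ⟨lX, a :: lnx, ?_, hlX, ?_⟩
      · exact (hperm.cons a).trans List.perm_middle.symm
      · intro b hb
        rcases List.mem_cons.1 hb with rfl | hb
        · exact ⟨h _ (List.mem_cons_self), hd⟩
        · exact hlnx b hb

theorem prod_of_X_assoc : ∀ lX : List (Polynomial B),
    (∀ a ∈ lX, Associated (Polynomial.X : Polynomial B) a) →
    ∃ U : Polynomial B, IsUnit U ∧ lX.prod = Polynomial.X ^ lX.length * U := by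
  intro lX
  induction lX with
  | nil => exact fun _ => ⟨1, isUnit_one, by simp⟩
  | cons a l ih =>
    intro h
    obtain ⟨U, hU, hprod⟩ := ih fun b hb => h b (List.mem_cons_of_mem a hb)
    obtain ⟨u, hu⟩ := h a (List.mem_cons_self)
    refine ⟨(u : Polynomial B) * U, u.isUnit.mul hU, ?_⟩
    rw [List.prod_cons, hprod, ← hu, List.length_cons, pow_succ]
    ring

theorem isUnit_of_prod_isUnit {M : Type*} [CommMonoid M] :
    ∀ l : List M, IsUnit l.prod → ∀ a ∈ l, IsUnit a := by
  intro l
  induction l with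
  | nil => simp
  | cons a l ih =>
    intro h b hb
    rw [List.prod_cons] at h
    rcases List.mem_cons.1 hb with rfl | hb
    · exact isUnit_of_mul_isUnit_left h
    · exact ih (isUnit_of_mul_isUnit_right h) b hb

theorem lm_ne_zero {g : Polynomial B} (hg : g ≠ 0) : φB g ≠ 0 :=
  fun h0 => hg (lm_inj (by rw [h0, map_zero]))

theorem not_isUnit_lm {g : Polynomial B} (hgX : ¬ Polynomial.X ∣ g) (hgu : ¬ IsUnit g) :
    ¬ IsUnit (φB g) := fun h => hgu ((isUnit_lm_iff hgX).1 h)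

/-- pull back a list of nonzero nonunits of the Laurent ring, entrywise. -/
theorem pull_entries_nu : ∀ l' : List LL, (∀ z ∈ l', z ≠ 0 ∧ ¬ IsUnit z) →
    ∃ la : List (Polynomial B), (∀ a ∈ la, ¬ IsUnit a ∧ ¬ Polynomial.X ∣ a) ∧
      (∃ T : LL, IsUnit T ∧ l'.prod = T * φB la.prod) ∧ la.length = l'.length := by
  intro l'
  induction l' with
  | nil => exact fun _ => ⟨[], by simp, ⟨1, isUnit_one, by simp⟩, rfl⟩
  | cons z l' ih =>
    intro h
    obtain ⟨la, hla, ⟨T, hT, hprod⟩, hlen⟩ := ih fun w hw => h w (List.mem_cons_of_mem z hw)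
    obtain ⟨a, ta, hta, haX, hza⟩ := normal_form z (h z (List.mem_cons_self)).1
    have hanu : ¬ IsUnit a := by
      intro hau
      exact (h z (List.mem_cons_self)).2 (hza ▸ hta.mul (hau.map (φB)))
    refine ⟨a :: la, ?_, ⟨ta * T, hta.mul hT, ?_⟩, by simp [hlen]⟩
    · intro b hb
      rcases List.mem_cons.1 hb with rfl | hb
      · exact ⟨hanu, haX⟩
      · exact hla b hb
    · rw [List.prod_cons, List.prod_cons, map_mul, hprod, hza]; ring

theorem not_X_dvd_mul {a b : Polynomial B} (ha : ¬ Polynomial.X ∣ a)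
    (hb : ¬ Polynomial.X ∣ b) : ¬ Polynomial.X ∣ a * b := fun hd => by
  rcases (Polynomial.prime_X (R := B)).2.2 _ _ hd with h | h
  · exact ha h
  · exact hb h

/-- H : split a factorization into nonunits into its X-part and its Laurent-visible part. -/
theorem split_nonunit : ∀ l : List (Polynomial B), (∀ a ∈ l, ¬ IsUnit a ∧ a ≠ 0) →
    ∃ (k : ℕ) (h : Polynomial B) (lg : List LL),
      ¬ Polynomial.X ∣ h ∧ l.prod = Polynomial.X ^ k * h ∧ (∀ z ∈ lg, ¬ IsUnit z) ∧
      (∃ t : LL, IsUnit t ∧ φB h = t * lg.prod) ∧ l.length ≤ k + lg.length := by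
  intro l
  induction l with
  | nil =>
    refine fun _ => ⟨0, 1, [], ?_, by simp, by simp, ⟨1, isUnit_one, by simp⟩, by simp⟩
    exact fun hd => Polynomial.not_isUnit_X (isUnit_of_dvd_one hd)
  | cons a l ih =>
    intro hmem
    obtain ⟨k, h, lg, hhX, hprod, hlg, ⟨t, ht, hth⟩, hlen⟩ :=
      ih fun b hb => hmem b (List.mem_cons_of_mem a hb)
    obtain ⟨ma, ga, hgaX, haeq⟩ := exists_X_decomp' a (hmem a (List.mem_cons_self)).2
    by_cases hgau : IsUnit ga
    · have hma : ma ≠ 0 := by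
        rintro rfl
        rw [pow_zero, one_mul] at haeq
        exact (hmem a (List.mem_cons_self)).1 (haeq ▸ hgau)
      refine ⟨ma + k, ga * h, lg, not_X_dvd_unit_mul hgau hhX, ?_, hlg,
        ⟨φB ga * t, (hgau.map (φB)).mul ht, ?_⟩, ?_⟩
      · rw [List.prod_cons, hprod, haeq, pow_add]; ring
      · rw [map_mul, hth]; ring
      · simp only [List.length_cons]; omega
    · refine ⟨ma + k, ga * h, φB ga :: lg, not_X_dvd_mul hgaX hhX, ?_, ?_, ⟨t, ht, ?_⟩, ?_⟩
      · rw [List.prod_cons, hprod, haeq, pow_add]; ring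
      · intro z hz
        rcases List.mem_cons.1 hz with rfl | hz
        · exact not_isUnit_lm hgaX hgau
        · exact hlg z hz
      · rw [map_mul, hth, List.prod_cons]; ring
      · simp only [List.length_cons]; omega

theorem la_rep : ∀ lX : List (Polynomial B),
    (∀ a ∈ lX, Associated (Polynomial.X : Polynomial B) a) →
    ListAssociated (Polynomial B) lX (List.replicate lX.length (Polynomial.X : Polynomial B)) := by
  intro lX h
  refine ⟨List.replicate lX.length Polynomial.X, List.Perm.refl _, ?_⟩
  induction lX with
  | nil => exact List.Forall₂.nil
  | cons a l ih =>
    rw [List.length_cons, List.replicate_succ]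
    exact List.Forall₂.cons (h a (List.mem_cons_self)).symm
      (ih fun b hb => h b (List.mem_cons_of_mem a hb))

/-- canonical shape of an irreducible factorization in `B[X]`. -/
theorem fact_canon {f g : Polynomial B} {m : ℕ} (hgX : ¬ Polynomial.X ∣ g)
    (hfm : f = Polynomial.X ^ m * g) (l : List (Polynomial B))
    (hirr : ∀ a ∈ l, Irreducible a) (hprod : f = l.prod) :
    ∃ lnx : List (Polynomial B), (∀ a ∈ lnx, Irreducible a ∧ ¬ Polynomial.X ∣ a) ∧
      l.length = m + lnx.length ∧ (∃ U : Polynomial B, IsUnit U ∧ g = U * lnx.prod) ∧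
      ListAssociated (Polynomial B) l (List.replicate m (Polynomial.X : Polynomial B) ++ lnx) := by
  obtain ⟨lX, lnx, hperm, hlX, hlnx⟩ := split_fact l hirr
  obtain ⟨U, hU, hXprod⟩ := prod_of_X_assoc lX hlX
  have hprod2 : Polynomial.X ^ m * g = Polynomial.X ^ lX.length * (U * lnx.prod) := by
    rw [← hfm, hprod, hperm.prod_eq, List.prod_append, hXprod]; ring
  obtain ⟨hm, hg⟩ := pow_mul_eq_pow_mul hgX
    (not_X_dvd_unit_mul hU (not_X_dvd_prod fun a ha => (hlnx a ha).2)) hprod2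
  refine ⟨lnx, hlnx, ?_, ⟨U, hU, hg⟩, ?_⟩
  · rw [hperm.length_eq, List.length_append]; omega
  · refine la_trans (la_of_perm hperm) (la_append ?_ (la_refl lnx))
    rw [hm]
    exact la_rep lX hlX

theorem la_of_forall₂ {l : List (Polynomial B)} {l' : List LL}
    (h : List.Forall₂ (fun a z => Associated (φB a) z) l l') :
    ListAssociated LL (l.map (φB)) l' :=
  ⟨l', List.Perm.refl _, List.forall₂_map_left_iff.2 h⟩

theorem la_map_phi {l l' : List (Polynomial B)} (h : ListAssociated (Polynomial B) l l') :
    ListAssociated LL (l.map (φB)) (l'.map (φB)) := by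
  obtain ⟨p, hp, hf⟩ := h
  exact ⟨p.map (φB), hp.map _, List.forall₂_map_right_iff.2 (List.forall₂_map_left_iff.2
    (hf.imp fun _ _ hab => hab.map (φB)))⟩

theorem la_reflect {l l' : List (Polynomial B)} (hl : ∀ a ∈ l, ¬ Polynomial.X ∣ a)
    (hl' : ∀ a ∈ l', ¬ Polynomial.X ∣ a)
    (h : ListAssociated LL (l.map (φB)) (l'.map (φB))) :
    ListAssociated (Polynomial B) l l' := by
  obtain ⟨q, hq, hf⟩ := h
  obtain ⟨w, hw, hf2⟩ := forall₂_perm_right hf hq.symm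
  obtain ⟨l₂, hl₂, rfl⟩ := perm_map_surj (φB) hw
  have hf3 : List.Forall₂ (fun a b => Associated (φB a) (φB b)) l₂ l' :=
    List.forall₂_map_right_iff.1 (List.forall₂_map_left_iff.1 hf2)
  have hf4 : List.Forall₂ (fun a b : Polynomial B => Associated a b) l₂ l' :=
    forall₂_imp_mem hf3 fun a ha b hb hab =>
      assoc_lm_iff (hl a (hl₂.symm.subset ha)) (hl' b hb) hab
  exact la_trans (la_of_perm hl₂) ⟨l', List.Perm.refl _, hf4⟩

open Classical in
noncomputable def pullList (g : Polynomial B) (p : List LL) : List (Polynomial B) :=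
  if hp : ∃ lc : List (Polynomial B), (∀ b ∈ lc, Irreducible b ∧ ¬ Polynomial.X ∣ b) ∧
      g = lc.prod ∧ ListAssociated LL (lc.map (φB)) p then hp.choose else []

theorem pullList_spec (g : Polynomial B) (p : List LL)
    (hp : ∃ lc : List (Polynomial B), (∀ b ∈ lc, Irreducible b ∧ ¬ Polynomial.X ∣ b) ∧
      g = lc.prod ∧ ListAssociated LL (lc.map (φB)) p) :
    (∀ b ∈ pullList g p, Irreducible b ∧ ¬ Polynomial.X ∣ b) ∧ g = (pullList g p).prod ∧
      ListAssociated LL ((pullList g p).map (φB)) p := by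
  simp only [pullList, dif_pos hp]
  exact hp.choose_spec

theorem domAtomic_iff : DomAtomic (Polynomial B) ↔ DomAtomic LL := by
  constructor
  · intro hA y hy hyu
    obtain ⟨g, t, ht, hgX, rfl⟩ := normal_form y hy
    have hgu : ¬ IsUnit g := fun h => hyu (ht.mul (h.map (φB)))
    obtain ⟨l, hlirr, hlprod⟩ := hA g (not_X_dvd_ne_zero hgX) hgu
    have hlX : ∀ a ∈ l, Irreducible a ∧ ¬ Polynomial.X ∣ a := fun a ha =>
      ⟨hlirr a ha, fun hd => hgX (hlprod ▸ hd.trans (List.dvd_prod ha))⟩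
    have hlne : l ≠ [] := by rintro rfl; exact hgu (hlprod ▸ isUnit_one)
    obtain ⟨l', hl'irr, hl'prod, _⟩ := lift_fact t ht l hlne hlX
    exact ⟨l', hl'irr, by rw [hl'prod, ← hlprod]⟩
  · intro hA f hf hfu
    obtain ⟨m, g, hgX, rfl⟩ := exists_X_decomp' f hf
    by_cases hgu : IsUnit g
    · have hm : m ≠ 0 := by
        rintro rfl
        rw [pow_zero, one_mul] at hfu
        exact hfu hgu
      obtain ⟨n, rfl⟩ : ∃ n, m = n + 1 :=
        ⟨m - 1, (Nat.succ_pred_eq_of_pos (Nat.pos_of_ne_zero hm)).symm⟩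
      refine ⟨(Polynomial.X * g) :: List.replicate n (Polynomial.X : Polynomial B), ?_, ?_⟩
      · intro a ha
        rcases List.mem_cons.1 ha with rfl | ha
        · exact (show Associated (Polynomial.X : Polynomial B) (Polynomial.X * g) from
            ⟨hgu.unit, by rw [hgu.unit_spec]⟩).irreducible Polynomial.irreducible_X
        · rw [List.eq_of_mem_replicate ha]
          exact Polynomial.irreducible_X
      · rw [List.prod_cons, List.prod_replicate, pow_succ]; ring
    · obtain ⟨l', hl'irr, hl'prod⟩ := hA (φB g)
        (lm_ne_zero (not_X_dvd_ne_zero hgX)) (not_isUnit_lm hgX hgu)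
      obtain ⟨l, hl, hgprod, _⟩ := pull_fact isUnit_one hgX hgu (one_mul _).symm l' hl'irr hl'prod
      refine ⟨List.replicate m (Polynomial.X : Polynomial B) ++ l, ?_, ?_⟩
      · intro a ha
        rcases List.mem_append.1 ha with ha | ha
        · rw [List.eq_of_mem_replicate ha]; exact Polynomial.irreducible_X
        · exact (hl a ha).1
      · rw [List.prod_append, List.prod_replicate, ← hgprod]

theorem domBFD_iff : DomBFD (Polynomial B) ↔ DomBFD LL := by
  constructor
  · intro hB y hy hyu
    obtain ⟨g, t, ht, hgX, rfl⟩ := normal_form y hy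
    have hgu : ¬ IsUnit g := fun h => hyu (ht.mul (h.map (φB)))
    obtain ⟨Bd, hBd⟩ := hB g (not_X_dvd_ne_zero hgX) hgu
    refine ⟨Bd, fun l' hl'nu hl'prod => ?_⟩
    have hl'nz : ∀ z ∈ l', z ≠ 0 ∧ ¬ IsUnit z := fun z hz =>
      ⟨fun h0 => hy (hl'prod.trans (List.prod_eq_zero (h0 ▸ hz))), hl'nu z hz⟩
    obtain ⟨la, hla, ⟨T, hT, hTprod⟩, hlen⟩ := pull_entries_nu l' hl'nz
    have heq : φB la.prod = (↑hT.unit⁻¹ * (t * φB g)) := by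
      calc φB la.prod = (↑hT.unit⁻¹ * T) * φB la.prod := by
            rw [hT.val_inv_mul, one_mul]
        _ = ↑hT.unit⁻¹ * (T * φB la.prod) := by ring
        _ = ↑hT.unit⁻¹ * (t * φB g) := by rw [← hTprod, ← hl'prod]
    have hassoc : Associated la.prod g := by
      refine (assoc_of_unit_mul hgX (not_X_dvd_prod fun a ha => (hla a ha).2)
        (hT.unit⁻¹.isUnit.mul ht) ?_).symm
      rw [heq]; ring
    obtain ⟨u, hu⟩ := hassoc
    match la, hla, hlen with
    | [], _, hlen =>
      exfalso
      apply hgu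
      rw [List.prod_nil, one_mul] at hu
      exact hu ▸ u.isUnit
    | a :: rest, hla, hlen =>
      have := hBd ((a * (u : Polynomial B)) :: rest) ?_ ?_
      · rw [← hlen]; simpa using this
      · intro b hb
        rcases List.mem_cons.1 hb with rfl | hb
        · intro hbu
          exact (hla a (List.mem_cons_self)).1 (isUnit_of_mul_isUnit_left hbu)
        · exact (hla b (List.mem_cons_of_mem a hb)).1
      · rw [← hu, List.prod_cons, List.prod_cons]; ring
  · intro hB f hf hfu
    obtain ⟨m, g, hgX, rfl⟩ := exists_X_decomp' f hf
    by_cases hgu : IsUnit g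
    · refine ⟨m, fun l hlnu hlprod => ?_⟩
      have hlnz : ∀ a ∈ l, ¬ IsUnit a ∧ a ≠ 0 := fun a ha =>
        ⟨hlnu a ha, fun h0 => hf (hlprod.trans (List.prod_eq_zero (h0 ▸ ha)))⟩
      obtain ⟨k, h, lg, hhX, hprod, hlg, ⟨t, ht, hth⟩, hlen⟩ := split_nonunit l hlnz
      obtain ⟨hkm, rfl⟩ := pow_mul_eq_pow_mul hgX hhX (hlprod.trans hprod)
      have hlgunit : ∀ z ∈ lg, IsUnit z := by
        refine isUnit_of_prod_isUnit lg (isUnit_of_mul_isUnit_right (x := t) ?_)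
        rw [← hth]
        exact hgu.map (φB)
      cases lg with
      | nil =>
        simp only [List.length_nil] at hlen
        omega
      | cons z lg => exact absurd (hlgunit z (List.mem_cons_self)) (hlg z (List.mem_cons_self))
    · obtain ⟨Bd, hBd⟩ := hB (φB g) (lm_ne_zero (not_X_dvd_ne_zero hgX)) (not_isUnit_lm hgX hgu)
      refine ⟨m + Bd, fun l hlnu hlprod => ?_⟩
      have hlnz : ∀ a ∈ l, ¬ IsUnit a ∧ a ≠ 0 := fun a ha =>
        ⟨hlnu a ha, fun h0 => hf (hlprod.trans (List.prod_eq_zero (h0 ▸ ha)))⟩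
      obtain ⟨k, h, lg, hhX, hprod, hlg, ⟨t, ht, hth⟩, hlen⟩ := split_nonunit l hlnz
      obtain ⟨hkm, rfl⟩ := pow_mul_eq_pow_mul hgX hhX (hlprod.trans hprod)
      cases lg with
      | nil =>
        exfalso
        apply not_isUnit_lm hgX hgu
        rw [hth, List.prod_nil, mul_one]
        exact ht
      | cons z lg =>
        have := hBd ((t * z) :: lg) ?_ ?_
        · simp only [List.length_cons] at this hlen ⊢
          omega
        · intro w hw
          rcases List.mem_cons.1 hw with rfl | hw
          · intro hwu
            exact hlg z (List.mem_cons_self) (isUnit_of_mul_isUnit_right hwu)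
          · exact hlg w (List.mem_cons_of_mem z hw)
        · rw [hth, List.prod_cons, List.prod_cons]; ring

theorem domHFD_iff : DomHFD (Polynomial B) ↔ DomHFD LL := by
  constructor
  · rintro ⟨hA, hH⟩
    refine ⟨domAtomic_iff.1 hA, fun y hy hyu l₁ l₂ h₁irr h₁prod h₂irr h₂prod => ?_⟩
    obtain ⟨g, t, ht, hgX, rfl⟩ := normal_form y hy
    have hgu : ¬ IsUnit g := fun h => hyu (ht.mul (h.map (φB)))
    obtain ⟨la₁, hla₁, hg₁, hf₁⟩ := pull_fact ht hgX hgu rfl l₁ h₁irr h₁prod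
    obtain ⟨la₂, hla₂, hg₂, hf₂⟩ := pull_fact ht hgX hgu rfl l₂ h₂irr h₂prod
    rw [← hf₁.length_eq, ← hf₂.length_eq]
    exact hH g (not_X_dvd_ne_zero hgX) hgu la₁ la₂
      (fun a ha => (hla₁ a ha).1) hg₁ (fun a ha => (hla₂ a ha).1) hg₂
  · rintro ⟨hA, hH⟩
    refine ⟨domAtomic_iff.2 hA, fun f hf hfu l₁ l₂ h₁irr h₁prod h₂irr h₂prod => ?_⟩
    obtain ⟨m, g, hgX, hfm⟩ := exists_X_decomp' f hf
    obtain ⟨lnx₁, hlnx₁, hlen₁, ⟨U₁, hU₁, hg₁⟩, _⟩ := fact_canon hgX hfm l₁ h₁irr h₁prod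
    obtain ⟨lnx₂, hlnx₂, hlen₂, ⟨U₂, hU₂, hg₂⟩, _⟩ := fact_canon hgX hfm l₂ h₂irr h₂prod
    by_cases hgu : IsUnit g
    · have he₁ : lnx₁ = [] := by
        cases lnx₁ with
        | nil => rfl
        | cons a rest =>
          exact absurd (isUnit_of_prod_isUnit _ (isUnit_of_mul_isUnit_right (hg₁ ▸ hgu))
            a (List.mem_cons_self)) (hlnx₁ a (List.mem_cons_self)).1.not_isUnit
      have he₂ : lnx₂ = [] := by
        cases lnx₂ with
        | nil => rfl
        | cons a rest =>
          exact absurd (isUnit_of_prod_isUnit _ (isUnit_of_mul_isUnit_right (hg₂ ▸ hgu))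
            a (List.mem_cons_self)) (hlnx₂ a (List.mem_cons_self)).1.not_isUnit
      rw [hlen₁, hlen₂, he₁, he₂]
    · match lnx₁, hlnx₁, hlen₁, hg₁ with
      | [], _, _, hg₁ => exact absurd (by rw [hg₁, List.prod_nil, mul_one]; exact hU₁) hgu
      | a₁ :: r₁, hlnx₁, hlen₁, hg₁ =>
        match lnx₂, hlnx₂, hlen₂, hg₂ with
        | [], _, _, hg₂ => exact absurd (by rw [hg₂, List.prod_nil, mul_one]; exact hU₂) hgu
        | a₂ :: r₂, hlnx₂, hlen₂, hg₂ =>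
          have key : ∀ (U a : Polynomial B) (r : List (Polynomial B)), IsUnit U →
              (∀ b ∈ a :: r, Irreducible b ∧ ¬ Polynomial.X ∣ b) → g = U * (a :: r).prod →
              ∃ l' : List LL, (∀ z ∈ l', Irreducible z) ∧ φB g = l'.prod ∧
                l'.length = (a :: r).length := by
            intro U a r hU hmem hgeq
            obtain ⟨l', hl'irr, hl'prod, hl'f⟩ := lift_fact (φB U) (hU.map (φB))
              (a :: r) (by simp) hmem
            refine ⟨l', hl'irr, ?_, by rw [← hl'f.length_eq]⟩
            rw [hl'prod, ← map_mul, ← hgeq]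
          obtain ⟨l₁', h₁'irr, h₁'prod, h₁'len⟩ := key U₁ a₁ r₁ hU₁ hlnx₁ hg₁
          obtain ⟨l₂', h₂'irr, h₂'prod, h₂'len⟩ := key U₂ a₂ r₂ hU₂ hlnx₂ hg₂
          have := hH (φB g) (lm_ne_zero (not_X_dvd_ne_zero hgX)) (not_isUnit_lm hgX hgu)
            l₁' l₂' h₁'irr h₁'prod h₂'irr h₂'prod
          rw [hlen₁, hlen₂]
          omega

theorem domUFD_iff : DomUFD (Polynomial B) ↔ DomUFD LL := by
  constructor
  · rintro ⟨hA, hU⟩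
    refine ⟨domAtomic_iff.1 hA, fun y hy hyu l₁ l₂ h₁irr h₁prod h₂irr h₂prod => ?_⟩
    obtain ⟨g, t, ht, hgX, rfl⟩ := normal_form y hy
    have hgu : ¬ IsUnit g := fun h => hyu (ht.mul (h.map (φB)))
    obtain ⟨la₁, hla₁, hg₁, hf₁⟩ := pull_fact ht hgX hgu rfl l₁ h₁irr h₁prod
    obtain ⟨la₂, hla₂, hg₂, hf₂⟩ := pull_fact ht hgX hgu rfl l₂ h₂irr h₂prod
    have hla : ListAssociated (Polynomial B) la₁ la₂ :=
      hU g (not_X_dvd_ne_zero hgX) hgu la₁ la₂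
        (fun a ha => (hla₁ a ha).1) hg₁ (fun a ha => (hla₂ a ha).1) hg₂
    exact la_trans (la_symm (la_of_forall₂ hf₁)) (la_trans (la_map_phi hla) (la_of_forall₂ hf₂))
  · rintro ⟨hA, hU⟩
    refine ⟨domAtomic_iff.2 hA, fun f hf hfu l₁ l₂ h₁irr h₁prod h₂irr h₂prod => ?_⟩
    obtain ⟨m, g, hgX, hfm⟩ := exists_X_decomp' f hf
    obtain ⟨lnx₁, hlnx₁, hlen₁, ⟨U₁, hU₁, hg₁⟩, hla₁⟩ := fact_canon hgX hfm l₁ h₁irr h₁prod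
    obtain ⟨lnx₂, hlnx₂, hlen₂, ⟨U₂, hU₂, hg₂⟩, hla₂⟩ := fact_canon hgX hfm l₂ h₂irr h₂prod
    suffices hs : ListAssociated (Polynomial B) lnx₁ lnx₂ from
      la_trans hla₁ (la_trans (la_append (la_refl _) hs) (la_symm hla₂))
    by_cases hgu : IsUnit g
    · have he₁ : lnx₁ = [] := by
        cases lnx₁ with
        | nil => rfl
        | cons a rest =>
          exact absurd (isUnit_of_prod_isUnit _ (isUnit_of_mul_isUnit_right (hg₁ ▸ hgu))
            a (List.mem_cons_self)) (hlnx₁ a (List.mem_cons_self)).1.not_isUnit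
      have he₂ : lnx₂ = [] := by
        cases lnx₂ with
        | nil => rfl
        | cons a rest =>
          exact absurd (isUnit_of_prod_isUnit _ (isUnit_of_mul_isUnit_right (hg₂ ▸ hgu))
            a (List.mem_cons_self)) (hlnx₂ a (List.mem_cons_self)).1.not_isUnit
      rw [he₁, he₂]
      exact la_refl _
    · match lnx₁, hlnx₁, hg₁ with
      | [], _, hg₁ => exact absurd (by rw [hg₁, List.prod_nil, mul_one]; exact hU₁) hgu
      | a₁ :: r₁, hlnx₁, hg₁ =>
        match lnx₂, hlnx₂, hg₂ with
        | [], _, hg₂ => exact absurd (by rw [hg₂, List.prod_nil, mul_one]; exact hU₂) hgu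
        | a₂ :: r₂, hlnx₂, hg₂ =>
          have key : ∀ (U a : Polynomial B) (r : List (Polynomial B)), IsUnit U →
              (∀ b ∈ a :: r, Irreducible b ∧ ¬ Polynomial.X ∣ b) → g = U * (a :: r).prod →
              (∀ b ∈ (U * a) :: r, Irreducible b ∧ ¬ Polynomial.X ∣ b) ∧
                g = ((U * a) :: r).prod ∧
                ListAssociated (Polynomial B) (a :: r) ((U * a) :: r) := by
            intro U a r hU hmem hgeq
            refine ⟨?_, by rw [List.prod_cons, hgeq, List.prod_cons]; ring, ?_⟩
            · intro b hb
              rcases List.mem_cons.1 hb with rfl | hb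
              · exact ⟨(associated_unit_mul_left a U hU).symm.irreducible
                  (hmem a (List.mem_cons_self)).1,
                  not_X_dvd_unit_mul hU (hmem a (List.mem_cons_self)).2⟩
              · exact hmem b (List.mem_cons_of_mem a hb)
            · exact ⟨(U * a) :: r, List.Perm.refl _,
                List.Forall₂.cons (associated_unit_mul_left a U hU).symm
                  (List.forall₂_same.2 fun x _ => Associated.refl x)⟩
          obtain ⟨hmem₁, hgeq₁, hlag₁⟩ := key U₁ a₁ r₁ hU₁ hlnx₁ hg₁
          obtain ⟨hmem₂, hgeq₂, hlag₂⟩ := key U₂ a₂ r₂ hU₂ hlnx₂ hg₂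
          have hphi : ListAssociated LL ((((U₁ * a₁) :: r₁).map (φB)))
              ((((U₂ * a₂) :: r₂).map (φB))) := by
            refine hU (φB g) (lm_ne_zero (not_X_dvd_ne_zero hgX)) (not_isUnit_lm hgX hgu)
              _ _ ?_ ?_ ?_ ?_
            · intro z hz
              obtain ⟨b, hb, rfl⟩ := List.mem_map.1 hz
              exact (irred_lm_iff (hmem₁ b hb).2).2 (hmem₁ b hb).1
            · rw [← map_list_prod, ← hgeq₁]
            · intro z hz
              obtain ⟨b, hb, rfl⟩ := List.mem_map.1 hz
              exact (irred_lm_iff (hmem₂ b hb).2).2 (hmem₂ b hb).1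
            · rw [← map_list_prod, ← hgeq₂]
          have hrefl := la_reflect (fun b hb => (hmem₁ b hb).2) (fun b hb => (hmem₂ b hb).2) hphi
          exact la_trans hlag₁ (la_trans hrefl (la_symm hlag₂))

theorem domFFD_iff : DomFFD (Polynomial B) ↔ DomFFD LL := by
  constructor
  · rintro ⟨hA, hF⟩
    refine ⟨domAtomic_iff.1 hA, fun y hy hyu => ?_⟩
    obtain ⟨g, t, ht, hgX, rfl⟩ := normal_form y hy
    have hgu : ¬ IsUnit g := fun h => hyu (ht.mul (h.map (φB)))
    obtain ⟨Fs, hfin, hrep⟩ := hF g (not_X_dvd_ne_zero hgX) hgu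
    refine ⟨(fun l => l.map (φB)) '' Fs, hfin.image _, fun l' hl'irr hl'prod => ?_⟩
    obtain ⟨la, hla, hg, hfa⟩ := pull_fact ht hgX hgu rfl l' hl'irr hl'prod
    obtain ⟨l'', hl''mem, hl''⟩ := hrep la (fun a ha => (hla a ha).1) hg
    exact ⟨l''.map (φB), Set.mem_image_of_mem _ hl''mem,
      la_trans (la_symm (la_of_forall₂ hfa)) (la_map_phi hl'')⟩
  · rintro ⟨hA, hF⟩
    refine ⟨domAtomic_iff.2 hA, fun f hf hfu => ?_⟩
    obtain ⟨m, g, hgX, hfm⟩ := exists_X_decomp' f hf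
    by_cases hgu : IsUnit g
    · refine ⟨{List.replicate m (Polynomial.X : Polynomial B)}, Set.finite_singleton _,
        fun l hlirr hlprod => ?_⟩
      obtain ⟨lnx, hlnx, _, ⟨U, hU, hg⟩, hla⟩ := fact_canon hgX hfm l hlirr hlprod
      have he : lnx = [] := by
        cases lnx with
        | nil => rfl
        | cons a rest =>
          exact absurd (isUnit_of_prod_isUnit _ (isUnit_of_mul_isUnit_right (hg ▸ hgu))
            a (List.mem_cons_self)) (hlnx a (List.mem_cons_self)).1.not_isUnit
      rw [he, List.append_nil] at hla
      exact ⟨_, rfl, hla⟩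
    · obtain ⟨Fs, hfin, hrep⟩ := hF (φB g) (lm_ne_zero (not_X_dvd_ne_zero hgX))
        (not_isUnit_lm hgX hgu)
      refine ⟨(fun p => List.replicate m (Polynomial.X : Polynomial B) ++ pullList g p) '' Fs,
        hfin.image _, fun l hlirr hlprod => ?_⟩
      obtain ⟨lnx, hlnx, _, ⟨U, hU, hg⟩, hla⟩ := fact_canon hgX hfm l hlirr hlprod
      match lnx, hlnx, hg, hla with
      | [], _, hg, _ => exact absurd (by rw [hg, List.prod_nil, mul_one]; exact hU) hgu
      | a :: r, hlnx, hg, hla =>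
        have hmem : ∀ b ∈ (U * a) :: r, Irreducible b ∧ ¬ Polynomial.X ∣ b := by
          intro b hb
          rcases List.mem_cons.1 hb with rfl | hb
          · exact ⟨(associated_unit_mul_left a U hU).symm.irreducible
              (hlnx a (List.mem_cons_self)).1,
              not_X_dvd_unit_mul hU (hlnx a (List.mem_cons_self)).2⟩
          · exact hlnx b (List.mem_cons_of_mem a hb)
        have hgeq : g = ((U * a) :: r).prod := by
          rw [List.prod_cons, hg, List.prod_cons]; ring
        have hlag : ListAssociated (Polynomial B) (a :: r) ((U * a) :: r) :=
          ⟨(U * a) :: r, List.Perm.refl _,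
            List.Forall₂.cons (associated_unit_mul_left a U hU).symm
              (List.forall₂_same.2 fun x _ => Associated.refl x)⟩
        obtain ⟨p, hpmem, hprel⟩ := hrep (((U * a) :: r).map (φB))
          (fun z hz => by
            obtain ⟨b, hb, rfl⟩ := List.mem_map.1 hz
            exact (irred_lm_iff (hmem b hb).2).2 (hmem b hb).1)
          (by rw [← map_list_prod, ← hgeq])
        have hex : ∃ lc : List (Polynomial B),
            (∀ b ∈ lc, Irreducible b ∧ ¬ Polynomial.X ∣ b) ∧ g = lc.prod ∧
              ListAssociated LL (lc.map (φB)) p :=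
          ⟨(U * a) :: r, hmem, hgeq, hprel⟩
        obtain ⟨hpl1, hpl2, hpl3⟩ := pullList_spec g p hex
        have hred : ListAssociated (Polynomial B) ((U * a) :: r) (pullList g p) :=
          la_reflect (fun b hb => (hmem b hb).2) (fun b hb => (hpl1 b hb).2)
            (la_trans hprel (la_symm hpl3))
        exact ⟨_, Set.mem_image_of_mem _ hpmem,
          la_trans hla (la_append (la_refl _) (la_trans hlag hred))⟩

end Laurent

theorem statement17 (B : Type*) [CommRing B] [IsDomain B] :
    (DomAtomic (Polynomial B) ↔
      DomAtomic (Localization (Submonoid.powers (Polynomial.X : Polynomial B)))) ∧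
    (DomBFD (Polynomial B) ↔
      DomBFD (Localization (Submonoid.powers (Polynomial.X : Polynomial B)))) ∧
    (DomFFD (Polynomial B) ↔
      DomFFD (Localization (Submonoid.powers (Polynomial.X : Polynomial B)))) ∧
    (DomHFD (Polynomial B) ↔
      DomHFD (Localization (Submonoid.powers (Polynomial.X : Polynomial B)))) ∧
    (DomUFD (Polynomial B) ↔
      DomUFD (Localization (Submonoid.powers (Polynomial.X : Polynomial B)))) :=
  ⟨domAtomic_iff, domBFD_iff, domFFD_iff, domHFD_iff, domUFD_iff⟩

end FactorizationPaper
end
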